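/- arXiv:2304.08567 — 11 statements merged into one kernel-verified Lean document; each statement's English description precedes it below -/
import Mathlib

section
/- If L is a genlex ordering of a set X ⊆ {0,1}^n and L' is any ordering of X, then c(L) ≤ c(L'), where c(M) is the sum over consecutive pairs (x,y) in M of λ(x,y) = max{i ∈ [n] : x_i ≠ y_i}. Moreover, the inequality is strict if L' is not genlex. -/
def lamPos {n : ℕ} (x y : Fin n → Bool) : ℕ :=
  (Finset.univ.filter (fun i : Fin n => x i ≠ y i)).sup (fun i => (i : ℕ) + 1)

def hamming {n : ℕ} (x y : Fin n → Bool) : ℕ :=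
  (Finset.univ.filter (fun i : Fin n => x i ≠ y i)).card

def sameSuffix {n : ℕ} (k : ℕ) (x y : Fin n → Bool) : Prop :=
  ∀ i : Fin n, n - k ≤ (i : ℕ) → x i = y i

def IsOrdering {n : ℕ} (X : Finset (Fin n → Bool)) (L : List (Fin n → Bool)) : Prop :=
  L.Nodup ∧ ∀ x, x ∈ L ↔ x ∈ X

def IsGenlex {n : ℕ} (L : List (Fin n → Bool)) : Prop :=
  ∀ (k i j m : ℕ) (hij : i ≤ j) (hjm : j ≤ m) (hm : m < L.length),
    sameSuffix k (L.get ⟨i, by omega⟩) (L.get ⟨m, hm⟩) →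
    sameSuffix k (L.get ⟨i, by omega⟩) (L.get ⟨j, by omega⟩)

def cost {n : ℕ} (L : List (Fin n → Bool)) : ℕ :=
  (L.zipWith lamPos L.tail).sum


section Changes
variable {α : Type*} [DecidableEq α]

def changes : List α → ℕ
  | [] => 0
  | [_] => 0
  | a :: b :: l => (if a = b then 0 else 1) + changes (b :: l)

lemma changes_cons_cons (a b : α) (l : List α) :
    changes (a :: b :: l) = (if a = b then 0 else 1) + changes (b :: l) := rfl

lemma card_le_changes_add_one (M : List α) : M.toFinset.card ≤ changes M + 1 := by
  induction M with
  | nil => simp [changes]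
  | cons a l ih =>
    cases l with
    | nil => simp [changes]
    | cons b t =>
      rw [changes_cons_cons]
      by_cases hab : a = b
      · subst hab
        simpa using ih
      · simp only [List.toFinset_cons] at ih ⊢
        calc (insert a (insert b t.toFinset)).card
            ≤ (insert b t.toFinset).card + 1 := Finset.card_insert_le _ _
          _ ≤ changes (b :: t) + 1 + 1 := by omega
          _ = (if a = b then 0 else 1) + changes (b :: t) + 1 := by simp [hab]; omega

lemma changes_cons_le (a b : α) (t : List α) : changes (a :: t) ≤ changes (b :: t) + 1 := by
  cases t with
  | nil => simp [changes]
  | cons c t' =>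
    rw [changes_cons_cons, changes_cons_cons]
    split_ifs <;> omega

lemma insert_card_le_changes (l : List α) (a : α)
    (h : ∃ (j m : ℕ) (hj : j < m) (hm : m < l.length),
      l.get ⟨m, hm⟩ = a ∧ l.get ⟨j, by omega⟩ ≠ a) :
    (insert a l.toFinset).card ≤ changes (a :: l) := by
  induction l with
  | nil => obtain ⟨j, m, hj, hm, _⟩ := h; simp at hm
  | cons b t ih =>
    obtain ⟨j, m, hj, hm, hma, hja⟩ := h
    rcases j with _ | j
    · -- j = 0 : the head b differs from a, and a occurs later
      rcases m with _ | m
      · omega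
      have hba : b ≠ a := by simpa using hja
      have ham : a ∈ t := by
        have h1 : t.get ⟨m, by simpa using hm⟩ = a := by simpa using hma
        rw [← h1]; exact List.get_mem _ _
      have hmem : a ∈ (b :: t).toFinset := by simp [ham]
      rw [Finset.insert_eq_self.2 hmem, changes_cons_cons,
        if_neg (fun h => hba h.symm)]
      have := card_le_changes_add_one (b :: t)
      omega
    · rcases m with _ | m
      · omega
      have h1 : t.get ⟨m, by simpa using hm⟩ = a := by simpa using hma
      have h2 : t.get ⟨j, by simp at hm; omega⟩ ≠ a := by simpa using hja
      have ihh := ih ⟨j, m, by omega, by simpa using hm, h1, h2⟩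
      by_cases hab : a = b
      · subst hab
        have h3 : insert a (a :: t).toFinset = insert a t.toFinset := by simp
        rw [h3, changes_cons_cons, if_pos rfl]
        omega
      · cases t with
        | nil => simp at hm
        | cons c t' =>
          rw [changes_cons_cons, if_neg hab]
          by_cases hbc : b = c
          · subst hbc
            have hins : insert b (b :: t').toFinset = (b :: t').toFinset := by simp
            rw [List.toFinset_cons, hins]
            have hx : changes (b :: b :: t') = changes (b :: t') := by
              rw [changes_cons_cons, if_pos rfl]; omega
            have hy : changes (a :: b :: t') = 1 + changes (b :: t') := by
              rw [changes_cons_cons, if_neg hab]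
            omega
          · have hx : changes (b :: c :: t') = 1 + changes (c :: t') := by
              rw [changes_cons_cons, if_neg hbc]
            have hy : changes (a :: c :: t') ≤ 1 + changes (c :: t') := by
              rw [changes_cons_cons]; split_ifs <;> omega
            have hz := Finset.card_insert_le a (c :: t').toFinset
            have hw := Finset.card_insert_le b (insert a (c :: t').toFinset)
            have hcomm : insert a (insert b (c :: t').toFinset)
                = insert b (insert a (c :: t').toFinset) := Finset.insert_comm _ _ _
            simp only [List.toFinset_cons] at *
            rw [hcomm]
            omega

lemma card_le_changes_of_bad (M : List α)
    (h : ∃ (i j m : ℕ) (hij : i < j) (hjm : j < m) (hm : m < M.length),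
      M.get ⟨m, hm⟩ = M.get ⟨i, by omega⟩ ∧ M.get ⟨j, by omega⟩ ≠ M.get ⟨i, by omega⟩) :
    M.toFinset.card ≤ changes M := by
  induction M with
  | nil => obtain ⟨_, _, _, _, _, hm, _⟩ := h; simp at hm
  | cons a l ih =>
    obtain ⟨i, j, m, hij, hjm, hm, h1, h2⟩ := h
    rcases i with _ | i
    · rcases j with _ | j
      · omega
      rcases m with _ | m
      · omega
      rw [List.toFinset_cons]
      apply insert_card_le_changes
      refine ⟨j, m, by omega, by simpa using hm, ?_, ?_⟩
      · simpa using h1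
      · simpa using h2
    · rcases j with _ | j
      · omega
      rcases m with _ | m
      · omega
      have ihh := ih ⟨i, j, m, by omega, by omega, by simpa using hm,
        by simpa using h1, by simpa using h2⟩
      cases l with
      | nil => simp at hm
      | cons b t =>
        by_cases hab : a = b
        · subst hab
          have h3 : (a :: a :: t).toFinset = (a :: t).toFinset := by simp
          rw [h3, changes_cons_cons, if_pos rfl]
          omega
        · rw [changes_cons_cons, if_neg hab]
          simp only [List.toFinset_cons] at *
          have := Finset.card_insert_le a (insert b t.toFinset)
          omega

def Contig (M : List α) : Prop :=
  ∀ (i j m : ℕ) (hij : i ≤ j) (hjm : j ≤ m) (hm : m < M.length),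
    M.get ⟨i, by omega⟩ = M.get ⟨m, hm⟩ → M.get ⟨i, by omega⟩ = M.get ⟨j, by omega⟩

lemma contig_tail {a : α} {l : List α} (h : Contig (a :: l)) : Contig l := by
  intro i j m hij hjm hm heq
  have hm' : m + 1 < (a :: l).length := by simp; omega
  have := h (i + 1) (j + 1) (m + 1) (by omega) (by omega) hm' (by simpa using heq)
  simpa using this

lemma changes_add_one_le_card (M : List α) (hM : M ≠ []) (h : Contig M) :
    changes M + 1 ≤ M.toFinset.card := by
  induction M with
  | nil => exact absurd rfl hM
  | cons a l ih =>
    cases l with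
    | nil => simp [changes]
    | cons b t =>
      have htail := contig_tail h
      rw [changes_cons_cons]
      by_cases hab : a = b
      · subst hab
        rw [if_pos rfl]
        have h3 : (a :: a :: t).toFinset = (a :: t).toFinset := by simp
        rw [h3]
        have := ih (by simp) htail
        omega
      · rw [if_neg hab]
        have hnot : a ∉ (b :: t).toFinset := by
          simp only [List.mem_toFinset]
          intro hmem
          obtain ⟨⟨m, hm⟩, hget⟩ := List.mem_iff_get.1 hmem
          have hm2 : m + 1 < (a :: b :: t).length := by simp at hm ⊢; omega
          have := h 0 1 (m + 1) (by omega) (by omega) hm2 (by simpa using hget.symm)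
          simp at this
          exact hab this
        rw [List.toFinset_cons, Finset.card_insert_of_notMem hnot]
        have := ih (by simp) htail
        omega

lemma changes_map_eq (f : α → α) (M : List α) :
    changes (M.map f) = (M.zipWith (fun a b => if f a = f b then (0:ℕ) else 1) M.tail).sum := by
  induction M with
  | nil => simp [changes]
  | cons a l ih =>
    cases l with
    | nil => simp [changes]
    | cons b t =>
      simp only [List.map_cons, changes_cons_cons, List.tail_cons, List.zipWith_cons_cons,
        List.sum_cons]
      simp only [List.tail_cons, List.map_cons] at ih
      rw [← ih]

end Changes

lemma sum_zipWith_swap {α : Type*} (hf : ℕ → α → α → ℕ) (s : Finset ℕ) :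
    ∀ M : List α,
      (M.zipWith (fun a b => ∑ k ∈ s, hf k a b) M.tail).sum
        = ∑ k ∈ s, (M.zipWith (hf k) M.tail).sum := by
  intro M
  induction M with
  | nil => simp
  | cons a l ih =>
    cases l with
    | nil => simp
    | cons b t =>
      simp only [List.tail_cons, List.zipWith_cons_cons, List.sum_cons] at ih ⊢
      rw [ih, ← Finset.sum_add_distrib]

def proj {n : ℕ} (k : ℕ) (x : Fin n → Bool) : Fin n → Bool :=
  fun i => if n - k ≤ (i : ℕ) then x i else false

lemma proj_eq_iff {n k : ℕ} (x y : Fin n → Bool) :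
    proj k x = proj k y ↔ sameSuffix k x y := by
  constructor
  · intro h i hi
    have := congrFun h i
    simp only [proj] at this
    rwa [if_pos hi, if_pos hi] at this
  · intro h
    funext i
    by_cases hi : n - k ≤ (i : ℕ)
    · simp [proj, hi, h i hi]
    · simp [proj, hi]

lemma lamPos_le {n : ℕ} (x y : Fin n → Bool) : lamPos x y ≤ n :=
  Finset.sup_le (fun i _ => i.isLt)

lemma lamPos_eq {n : ℕ} (x y : Fin n → Bool) :
    lamPos x y = ∑ k ∈ Finset.range n,
      (if proj (k + 1) x = proj (k + 1) y then (0:ℕ) else 1) := by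
  have hd := lamPos_le x y
  have key : ∀ k ∈ Finset.range n, ((if proj (k + 1) x = proj (k + 1) y then (0:ℕ) else 1) =
      if n - lamPos x y ≤ k then 1 else 0) := by
    intro k hk
    rw [Finset.mem_range] at hk
    have h2 : ¬ sameSuffix (k + 1) x y ↔ n - (k + 1) < lamPos x y := by
      rw [lamPos, Finset.lt_sup_iff]
      constructor
      · intro h
        simp only [sameSuffix, not_forall] at h
        obtain ⟨i, hi, hne⟩ := h
        refine ⟨i, by simp [hne], by omega⟩
      · rintro ⟨i, hi, hlt⟩
        simp only [Finset.mem_filter] at hi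
        intro hs
        exact hi.2 (hs i (by omega))
    rw [← proj_eq_iff] at h2
    by_cases hp : proj (k + 1) x = proj (k + 1) y
    · rw [if_pos hp, if_neg]
      intro hle
      have : n - (k + 1) < lamPos x y := by omega
      exact (h2.2 this) hp
    · rw [if_neg hp, if_pos]
      have := h2.1 hp
      omega
  rw [Finset.sum_congr rfl key]
  have hsum : ∑ k ∈ Finset.range n, (if n - lamPos x y ≤ k then (1:ℕ) else 0)
      = ((Finset.range n).filter (fun k => n - lamPos x y ≤ k)).card := by
    rw [Finset.card_filter]
  rw [hsum]
  have hfil : (Finset.range n).filter (fun k => n - lamPos x y ≤ k)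
      = Finset.Ico (n - lamPos x y) n := by
    ext a
    simp only [Finset.mem_filter, Finset.mem_range, Finset.mem_Ico]
    omega
  rw [hfil, Nat.card_Ico]
  omega

lemma cost_eq {n : ℕ} (M : List (Fin n → Bool)) :
    cost M = ∑ k ∈ Finset.range n, changes (M.map (proj (k + 1))) := by
  have hfun : (lamPos (n := n)) = fun x y => ∑ k ∈ Finset.range n,
      (if proj (k + 1) x = proj (k + 1) y then (0:ℕ) else 1) := by
    funext x y; exact lamPos_eq x y
  rw [cost, hfun, sum_zipWith_swap]
  exact Finset.sum_congr rfl (fun k _ => (changes_map_eq (proj (k + 1)) M).symm)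

lemma contig_map_of_genlex {n : ℕ} {L : List (Fin n → Bool)} (h : IsGenlex L) (k : ℕ) :
    Contig (L.map (proj (k + 1))) := by
  intro i j m hij hjm hm heq
  have hm' : m < L.length := by simpa using hm
  simp only [List.get_eq_getElem, List.getElem_map] at heq ⊢
  rw [proj_eq_iff] at heq ⊢
  exact h (k + 1) i j m hij hjm hm' heq

lemma sameSuffix_zero {n : ℕ} (x y : Fin n → Bool) : sameSuffix 0 x y := by
  intro i hi
  have := i.isLt
  omega

lemma sameSuffix_congr {n k₁ k₂ : ℕ} (h : n - k₁ = n - k₂) (x y : Fin n → Bool) :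
    sameSuffix k₁ x y ↔ sameSuffix k₂ x y := by
  unfold sameSuffix
  rw [h]

lemma exists_bad {n : ℕ} {L' : List (Fin n → Bool)} (h : ¬ IsGenlex L') :
    ∃ k < n, ∃ (i j m : ℕ) (hij : i < j) (hjm : j < m) (hm : m < L'.length),
      sameSuffix (k + 1) (L'.get ⟨i, by omega⟩) (L'.get ⟨m, hm⟩) ∧
      ¬ sameSuffix (k + 1) (L'.get ⟨i, by omega⟩) (L'.get ⟨j, by omega⟩) := by
  unfold IsGenlex at h
  push_neg at h
  obtain ⟨k, i, j, m, hij, hjm, hm, hs, hns⟩ := h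
  have hn : 0 < n := by
    by_contra hn0
    apply hns
    intro i' hi'
    have := i'.isLt
    omega
  have hk : 0 < k := by
    rcases Nat.eq_zero_or_pos k with h0 | h0
    · subst h0
      exact absurd (sameSuffix_zero _ _) hns
    · exact h0
  have hne : i ≠ j := by
    rintro rfl
    exact hns (fun _ _ => rfl)
  have hjm' : j ≠ m := by
    rintro rfl
    exact hns hs
  refine ⟨min k n - 1, by omega, i, j, m, lt_of_le_of_ne hij hne,
    lt_of_le_of_ne hjm hjm', hm, ?_, ?_⟩
  · exact (sameSuffix_congr (by omega) _ _).mpr hs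
  · intro hc
    exact hns ((sameSuffix_congr (by omega) _ _).mp hc)

lemma toFinset_map_eq {n : ℕ} {X : Finset (Fin n → Bool)} {L : List (Fin n → Bool)}
    (hL : IsOrdering X L) (f : (Fin n → Bool) → (Fin n → Bool)) :
    (L.map f).toFinset = X.image f := by
  ext a
  simp only [List.mem_toFinset, List.mem_map, Finset.mem_image, hL.2]

theorem genlex_cost_optimal {n : ℕ} (X : Finset (Fin n → Bool))
    (L L' : List (Fin n → Bool))
    (hL : IsOrdering X L) (hgen : IsGenlex L) (hL' : IsOrdering X L') :
    cost L ≤ cost L' ∧ (¬ IsGenlex L' → cost L < cost L') := by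
  by_cases hnil : L = []
  · have hnil' : L' = [] := by
      rw [List.eq_nil_iff_forall_not_mem]
      intro x hx
      have hx1 : x ∈ X := (hL'.2 x).1 hx
      have hx2 : x ∈ L := (hL.2 x).2 hx1
      rw [hnil] at hx2
      simp at hx2
    subst hnil'
    subst hnil
    refine ⟨le_refl _, fun hng => ?_⟩
    exfalso
    apply hng
    intro k i j m hij hjm hm
    simp at hm
  · have hX : ∃ x, x ∈ X := by
      cases L with
      | nil => exact absurd rfl hnil
      | cons a t => exact ⟨a, (hL.2 a).1 (by simp)⟩
    have hL'ne : L' ≠ [] := by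
      intro h0
      obtain ⟨x, hx⟩ := hX
      have := (hL'.2 x).2 hx
      rw [h0] at this
      simp at this
    have hLk : ∀ k, changes (L.map (proj (k + 1))) + 1 = (X.image (proj (k + 1))).card := by
      intro k
      have h1 : (L.map (proj (k + 1))).toFinset = X.image (proj (k + 1)) :=
        toFinset_map_eq hL _
      have h2 := card_le_changes_add_one (L.map (proj (k + 1)))
      have h3 := changes_add_one_le_card (L.map (proj (k + 1)))
        (by simpa using hnil) (contig_map_of_genlex hgen k)
      rw [h1] at h2 h3
      omega
    have hL'k : ∀ k, (X.image (proj (k + 1))).card ≤ changes (L'.map (proj (k + 1))) + 1 := by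
      intro k
      have h2 := card_le_changes_add_one (L'.map (proj (k + 1)))
      rw [toFinset_map_eq hL'] at h2
      exact h2
    have hpt : ∀ k, changes (L.map (proj (k + 1))) ≤ changes (L'.map (proj (k + 1))) := by
      intro k
      have := hLk k
      have := hL'k k
      omega
    constructor
    · rw [cost_eq, cost_eq]
      exact Finset.sum_le_sum (fun k _ => hpt k)
    · intro hng
      obtain ⟨k, hkn, i, j, m, hij, hjm, hm, hs, hns⟩ := exists_bad hng
      have hstrict : changes (L.map (proj (k + 1))) < changes (L'.map (proj (k + 1))) := by
        have hq : (L'.map (proj (k + 1))).toFinset.card ≤ changes (L'.map (proj (k + 1))) := by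
          apply card_le_changes_of_bad
          refine ⟨i, j, m, hij, hjm, by simpa using hm, ?_, ?_⟩
          · simp only [List.get_eq_getElem, List.getElem_map]
            exact ((proj_eq_iff _ _).2 hs).symm
          · simp only [List.get_eq_getElem, List.getElem_map]
            intro hcon
            exact hns ((proj_eq_iff _ _).1 hcon.symm)
        rw [toFinset_map_eq hL'] at hq
        have := hLk k
        have := hL'k k
        omega
      rw [cost_eq, cost_eq]
      exact Finset.sum_lt_sum (fun k _ => hpt k) ⟨k, Finset.mem_range.2 hkn, hstrict⟩
end

section
/- Any two genlex orderings of the same set X ⊆ {0,1}^n have the same cost c(L). -/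
instance {n k : ℕ} (x y : Fin n → Bool) : Decidable (sameSuffix k x y) := by
  unfold sameSuffix; infer_instance

/-- class representative for suffix of length k -/
def cls {n : ℕ} (k : ℕ) (x : Fin n → Bool) : Fin n → Bool :=
  fun i => if n - k ≤ (i : ℕ) then x i else false

def pairCnt {n : ℕ} (k : ℕ) (L : List (Fin n → Bool)) : ℕ :=
  ((L.zip L.tail).map (fun p => if sameSuffix k p.1 p.2 then 0 else 1)).sum

lemma cls_eq_iff {n k : ℕ} (x y : Fin n → Bool) :
    cls k x = cls k y ↔ sameSuffix k x y := by
  constructor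
  · intro h i hi
    have := congrFun h i
    simpa [cls, hi] using this
  · intro h
    funext i
    by_cases hi : n - k ≤ (i : ℕ)
    · simpa [cls, hi] using h i hi
    · simp [cls, hi]

lemma sameSuffix_iff {n : ℕ} (k : ℕ) (x y : Fin n → Bool) :
    sameSuffix k x y ↔ lamPos x y ≤ n - k := by
  constructor
  · intro h
    apply Finset.sup_le
    intro i hi
    simp only [Finset.mem_filter, Finset.mem_univ, true_and] at hi
    rcases Nat.lt_or_ge (i : ℕ) (n - k) with h' | h'
    · omega
    · exact absurd (h i h') hi
  · intro h i hi
    by_contra hne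
    have hmem : i ∈ Finset.univ.filter (fun i : Fin n => x i ≠ y i) := by
      simp [hne]
    have h2 : (i : ℕ) + 1 ≤ n - k :=
      le_trans (Finset.le_sup (f := fun i : Fin n => (i : ℕ) + 1) hmem) h
    omega

lemma lamPos_eq_sum {n : ℕ} (x y : Fin n → Bool) :
    lamPos x y = ∑ k ∈ Finset.Icc 1 n, (if sameSuffix k x y then 0 else 1) := by
  have hd : lamPos x y ≤ n := lamPos_le x y
  have h1 : ∀ k, (if sameSuffix k x y then (0:ℕ) else 1)
      = (if ¬ (lamPos x y ≤ n - k) then 1 else 0) := by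
    intro k
    by_cases h : sameSuffix k x y
    · simp [h, (sameSuffix_iff k x y).mp h]
    · have := (sameSuffix_iff k x y).not.mp h
      simp [h, this]
  simp_rw [h1]
  have h2 : (Finset.Icc 1 n).filter (fun k => ¬ lamPos x y ≤ n - k)
      = Finset.Ioc (n - lamPos x y) n := by
    ext k
    simp only [Finset.mem_filter, Finset.mem_Icc, Finset.mem_Ioc, not_le]
    omega
  rw [Finset.sum_ite, Finset.sum_const, Finset.sum_const, h2, Nat.card_Ioc]
  simp
  omega

lemma sum_map_sum {α β : Type*} (s : Finset β) (f : β → α → ℕ) :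
    ∀ P : List α, (P.map (fun p => ∑ k ∈ s, f k p)).sum = ∑ k ∈ s, (P.map (f k)).sum
  | [] => by simp
  | p :: P => by
      simp [sum_map_sum s f P, Finset.sum_add_distrib]

lemma cost_eq_sum {n : ℕ} (L : List (Fin n → Bool)) :
    cost L = ∑ k ∈ Finset.Icc 1 n, pairCnt k L := by
  have hz : ∀ {α β γ : Type} (f : α → β → γ) (a : List α) (b : List β),
      List.zipWith f a b = (a.zip b).map fun p => f p.1 p.2 := by
    intro α β γ f a
    induction a with
    | nil => intro b; simp
    | cons x a ih =>
      intro b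
      cases b with
      | nil => simp
      | cons y b => simp [ih b]
  unfold cost pairCnt
  rw [hz lamPos L L.tail]
  simp_rw [lamPos_eq_sum]
  exact sum_map_sum _ _ _

lemma genlex_tail {n : ℕ} {x : Fin n → Bool} {t : List (Fin n → Bool)}
    (h : IsGenlex (x :: t)) : IsGenlex t := by
  intro k i j m hij hjm hm hs
  exact h k (i+1) (j+1) (m+1) (by omega) (by omega) (by simp; omega) hs

lemma genlex_head {n : ℕ} {x y z : Fin n → Bool} {t : List (Fin n → Bool)} {k : ℕ}
    (h : IsGenlex (x :: y :: t)) (hz : z ∈ y :: t) (hs : sameSuffix k x z) :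
    sameSuffix k x y := by
  obtain ⟨m, rfl⟩ := List.mem_iff_get.mp hz
  exact h k 0 1 ((m : ℕ) + 1) (by omega) (by omega)
    (by simpa using Nat.succ_lt_succ m.isLt) hs

lemma blocks {n : ℕ} (k : ℕ) :
    ∀ L : List (Fin n → Bool), IsGenlex L → L ≠ [] →
      (L.map (cls k)).toFinset.card = pairCnt k L + 1
  | [], _, h => absurd rfl h
  | [x], _, _ => by simp [pairCnt]
  | x :: y :: t, hg, _ => by
      have ht := genlex_tail hg
      have IH := blocks k (y :: t) ht (by simp)
      have hpc : pairCnt k (x :: y :: t)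
          = (if sameSuffix k x y then 0 else 1) + pairCnt k (y :: t) := by
        simp [pairCnt]
      by_cases h : sameSuffix k x y
      · have hxy : cls k x = cls k y := (cls_eq_iff x y).mpr h
        have hmem : cls k y ∈ ((y :: t).map (cls k)).toFinset := by
          simp
        have heq : ((x :: y :: t).map (cls k)).toFinset = ((y :: t).map (cls k)).toFinset := by
          rw [List.map_cons, List.toFinset_cons, hxy]
          exact Finset.insert_eq_self.mpr hmem
        rw [heq, IH, hpc, if_pos h]
        omega
      · have hnm : cls k x ∉ ((y :: t).map (cls k)).toFinset := by
          intro hmem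
          rw [List.mem_toFinset, List.mem_map] at hmem
          obtain ⟨z, hzmem, hze⟩ := hmem
          have : sameSuffix k x z := (cls_eq_iff x z).mp hze.symm
          exact h (genlex_head hg hzmem this)
        have : ((x :: y :: t).map (cls k)).toFinset
            = insert (cls k x) ((y :: t).map (cls k)).toFinset := by
          simp
        rw [this, Finset.card_insert_of_notMem hnm, IH, hpc, if_neg h]
        omega

theorem genlex_cost_unique {n : ℕ} (X : Finset (Fin n → Bool))
    (L L' : List (Fin n → Bool))
    (hL : IsOrdering X L) (hgen : IsGenlex L)
    (hL' : IsOrdering X L') (hgen' : IsGenlex L') :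
    cost L = cost L' := by
  by_cases hE : L = []
  · have hX : ∀ x, x ∉ X := by
      intro x hx
      have := (hL.2 x).mpr hx
      simp [hE] at this
    have hE' : L' = [] := by
      rw [List.eq_nil_iff_forall_not_mem]
      intro x hx
      exact hX x ((hL'.2 x).mp hx)
    rw [hE, hE']
  · have hE' : L' ≠ [] := by
      intro hc
      obtain ⟨x, hx⟩ := List.exists_mem_of_ne_nil L hE
      have := (hL'.2 x).mpr ((hL.2 x).mp hx)
      simp [hc] at this
    rw [cost_eq_sum, cost_eq_sum]
    apply Finset.sum_congr rfl
    intro k _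
    have himg : ∀ M : List (Fin n → Bool), (∀ x, x ∈ M ↔ x ∈ X) →
        (M.map (cls k)).toFinset = X.image (cls k) := by
      intro M hM
      ext z
      simp only [List.mem_toFinset, List.mem_map, Finset.mem_image]
      constructor
      · rintro ⟨a, ha, rfl⟩; exact ⟨a, (hM a).mp ha, rfl⟩
      · rintro ⟨a, ha, rfl⟩; exact ⟨a, (hM a).mpr ha, rfl⟩
    have h1 := blocks k L hgen hE
    have h2 := blocks k L' hgen' hE'
    rw [himg L hL.2] at h1
    rw [himg L' hL'.2] at h2
    omega
end

section
/- Let L = x_1,...,x_ℓ be a genlex ordering of X ⊆ {0,1}^n, let 1 ≤ i < ℓ, and let β := min B_L(x_i) be the minimum unseen branching of x_i. Then every x_j ∈ X with x_j ≠ x_i and λ(x_i, x_j) = β satisfies j > i. -/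
lemma lamPos_spec {n : ℕ} {x y : Fin n → Bool} (h : x ≠ y) :
    ∃ p : Fin n, x p ≠ y p ∧ (p : ℕ) + 1 = lamPos x y ∧
      ∀ q : Fin n, (p : ℕ) < (q : ℕ) → x q = y q := by
  have hne : (Finset.univ.filter (fun i : Fin n => x i ≠ y i)).Nonempty := by
    by_contra hc
    apply h
    funext q
    by_contra hq
    exact hc ⟨q, by simp [hq]⟩
  obtain ⟨p, hp, hsup⟩ := Finset.exists_mem_eq_sup _ hne (fun i : Fin n => (i : ℕ) + 1)
  have hsup' : lamPos x y = (p : ℕ) + 1 := hsup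
  refine ⟨p, by simpa using hp, hsup'.symm, ?_⟩
  intro q hq
  by_contra hxy
  have : (q : ℕ) + 1 ≤ lamPos x y :=
    Finset.le_sup (f := fun i : Fin n => (i : ℕ) + 1) (by simp [hxy])
  omega

theorem branchings_min_forward {n : ℕ} (X : Finset (Fin n → Bool))
    (L : List (Fin n → Bool)) (hL : IsOrdering X L) (hgen : IsGenlex L)
    (i : ℕ) (hi : i + 1 < L.length) (β : ℕ)
    (hβ : IsLeast {v | ∃ j, ∃ hj : j < L.length, i < j ∧
      v = lamPos (L.get ⟨i, by omega⟩) (L.get ⟨j, hj⟩)} β)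
    (j : ℕ) (hj : j < L.length)
    (hne : L.get ⟨j, hj⟩ ≠ L.get ⟨i, by omega⟩)
    (hlam : lamPos (L.get ⟨i, by omega⟩) (L.get ⟨j, hj⟩) = β) :
    i < j := by
  by_contra hji
  push_neg at hji
  obtain ⟨m, hm, him, hβm⟩ := hβ.1
  set xi := L.get ⟨i, by omega⟩ with hxi
  set xj := L.get ⟨j, hj⟩ with hxj
  set xm := L.get ⟨m, hm⟩ with hxm
  obtain ⟨p, hpne, hpβ, hpab⟩ := lamPos_spec (x := xi) (y := xj) (Ne.symm hne)
  have hxim : xi ≠ xm := by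
    intro h
    rw [h] at hβm
    simp [lamPos] at hβm
    omega
  obtain ⟨p', hp'ne, hp'β, hp'ab⟩ := lamPos_spec hxim
  have hpp : p' = p := by
    apply Fin.ext
    omega
  subst hpp
  have hsuf : sameSuffix (n - (p' : ℕ)) xj xm := by
    intro q hq
    have hq' : (p' : ℕ) ≤ (q : ℕ) := by
      have := p'.2; omega
    rcases eq_or_lt_of_le hq' with h | h
    · have hqp : q = p' := Fin.ext h.symm
      subst hqp
      revert hpne hp'ne
      cases xi q <;> cases xj q <;> cases xm q <;> simp
    · rw [← hpab q h, hp'ab q h]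
  have hres := hgen (n - (p' : ℕ)) j i m hji (le_of_lt him) hm hsuf
  have hfin : xj p' = xi p' := hres p' (by have := p'.2; omega)
  exact hpne hfin.symm
end

section
/- For any prefix graph G = (X, E) with X ⊆ {0,1}^n and any vertex x̃ ∈ X, there exists a genlex Hamilton path in G starting at x̃. -/
def IsPrefixGraph : (n : ℕ) → Finset (Fin n → Bool) → ((Fin n → Bool) → (Fin n → Bool) → Prop) → Prop
  | 0, _, _ => True
  | (n + 1), X, E =>
    (∀ b : Bool,
      IsPrefixGraph n
        ((X.filter (fun x => x (Fin.last n) = b)).image (fun x => fun i : Fin n => x i.castSucc))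
        (fun x y => E (Fin.snoc x b) (Fin.snoc y b))) ∧
    (((X.filter (fun x => x (Fin.last n) = false)).Nonempty ∧
      (X.filter (fun x => x (Fin.last n) = true)).Nonempty) →
      ∀ x ∈ X, ∃ y ∈ X, y (Fin.last n) ≠ x (Fin.last n) ∧ E x y)

lemma bool_eq_not {a c : Bool} (h : a ≠ c) : a = !c := by
  cases a <;> cases c <;> simp_all

lemma snoc_injective {n : ℕ} (b : Bool) :
    Function.Injective (fun u : Fin n → Bool => (Fin.snoc u b : Fin (n+1) → Bool)) := by
  intro u v h
  funext i
  have := congrFun h i.castSucc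
  simpa using this

lemma sameSuffix_snoc {n k : ℕ} (hk : 1 ≤ k) (x y : Fin n → Bool) (b c : Bool) :
    sameSuffix k (Fin.snoc x b) (Fin.snoc y c) ↔ b = c ∧ sameSuffix (k - 1) x y := by
  constructor
  · intro h
    constructor
    · have := h (Fin.last n) (by simp [Fin.last]; omega)
      simpa using this
    · intro i hi
      have := h i.castSucc (by simp [Fin.coe_castSucc]; omega)
      simpa using this
  · rintro ⟨rfl, h⟩
    intro i hi
    rcases Fin.eq_castSucc_or_eq_last i with ⟨j, rfl⟩ | rfl
    · simp only [Fin.snoc_castSucc]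
      exact h j (by simp [Fin.coe_castSucc] at hi ⊢; omega)
    · simp

lemma isGenlex_map_snoc {n : ℕ} (b : Bool) (L : List (Fin n → Bool)) (h : IsGenlex L) :
    IsGenlex (L.map (fun x => Fin.snoc x b)) := by
  intro k i j m hij hjm hm hs
  rcases Nat.eq_zero_or_pos k with rfl | hk
  · exact sameSuffix_zero _ _
  have hm' : m < L.length := by simpa using hm
  simp only [List.get_eq_getElem, List.getElem_map] at hs ⊢
  rw [sameSuffix_snoc hk] at hs ⊢
  refine ⟨rfl, ?_⟩
  have := h (k - 1) i j m hij hjm hm' (by simpa using hs.2)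
  simpa using this

lemma isGenlex_append {n : ℕ} (b : Bool) (A B : List (Fin (n + 1) → Bool))
    (hA : ∀ x ∈ A, x (Fin.last n) = b) (hB : ∀ x ∈ B, x (Fin.last n) ≠ b)
    (gA : IsGenlex A) (gB : IsGenlex B) : IsGenlex (A ++ B) := by
  intro k i j m hij hjm hm hs
  rcases Nat.eq_zero_or_pos k with rfl | hk
  · exact sameSuffix_zero _ _
  have hm0 : m < A.length + B.length := by simpa using hm
  simp only [List.get_eq_getElem] at hs ⊢
  by_cases hmA : m < A.length
  · -- all indices in A
    rw [List.getElem_append_left (by omega : i < A.length),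
        List.getElem_append_left hmA] at hs
    rw [List.getElem_append_left (by omega : i < A.length),
        List.getElem_append_left (by omega : j < A.length)]
    have := gA k i j m hij hjm hmA (by simpa using hs)
    simpa using this
  · by_cases hiA : i < A.length
    · -- mixed: forces a contradiction since last bits differ
      exfalso
      have hlast := hs (Fin.last n) (by simp [Fin.val_last]; omega)
      rw [List.getElem_append_left hiA, List.getElem_append_right (by omega)] at hlast
      have h1 : A[i] ∈ A := List.getElem_mem _
      have h2 : B[m - A.length]'(by omega) ∈ B := List.getElem_mem _
      exact hB _ h2 (by rw [← hlast]; exact hA _ h1)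
    · -- all indices in B
      push_neg at hiA
      rw [List.getElem_append_right hiA, List.getElem_append_right (by omega)] at hs
      rw [List.getElem_append_right hiA, List.getElem_append_right (by omega)]
      have := gB k (i - A.length) (j - A.length) (m - A.length)
        (by omega) (by omega) (by omega) (by simpa using hs)
      simpa using this

lemma part_list {n : ℕ} (X : Finset (Fin (n + 1) → Bool))
    (E : (Fin (n + 1) → Bool) → (Fin (n + 1) → Bool) → Prop)
    (IH : ∀ (X' : Finset (Fin n → Bool)) (E' : (Fin n → Bool) → (Fin n → Bool) → Prop),
      IsPrefixGraph n X' E' → ∀ x0 ∈ X',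
        ∃ L, IsOrdering X' L ∧ IsGenlex L ∧ L.Chain' E' ∧ L.head? = some x0)
    (hpg : ∀ b : Bool, IsPrefixGraph n
        ((X.filter (fun x => x (Fin.last n) = b)).image (fun x => fun i : Fin n => x i.castSucc))
        (fun x y => E (Fin.snoc x b) (Fin.snoc y b)))
    (c : Bool) (x : Fin (n + 1) → Bool) (hx : x ∈ X) (hc : x (Fin.last n) = c) :
    ∃ A : List (Fin (n + 1) → Bool), A ≠ [] ∧
      IsOrdering (X.filter (fun z => z (Fin.last n) = c)) A ∧ IsGenlex A ∧
      A.Chain' E ∧ A.head? = some x := by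
  have hx' : (fun i : Fin n => x i.castSucc) ∈
      (X.filter (fun z => z (Fin.last n) = c)).image (fun z => fun i : Fin n => z i.castSucc) :=
    Finset.mem_image.mpr ⟨x, Finset.mem_filter.mpr ⟨hx, hc⟩, rfl⟩
  obtain ⟨L1, ⟨hnd, hmem⟩, hgen, hch, hhd⟩ := IH _ _ (hpg c) _ hx'
  have hL1ne : L1 ≠ [] := by
    intro h; rw [h] at hhd; simp at hhd
  have hsnoc : ∀ z : Fin (n + 1) → Bool, z (Fin.last n) = c →
      Fin.snoc (fun i : Fin n => z i.castSucc) c = z := by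
    intro z hz
    rw [← hz]
    exact Fin.snoc_init_self z
  refine ⟨L1.map (fun u => Fin.snoc u c), ?_, ⟨hnd.map (snoc_injective c), ?_⟩,
    isGenlex_map_snoc c L1 hgen, (List.isChain_map _).mpr hch, ?_⟩
  · simp [List.map_eq_nil_iff, hL1ne]
  · intro w
    simp only [List.mem_map]
    constructor
    · rintro ⟨u, hu, rfl⟩
      obtain ⟨z, hz, rfl⟩ := Finset.mem_image.mp ((hmem u).mp hu)
      obtain ⟨hzX, hzc⟩ := Finset.mem_filter.mp hz
      rw [hsnoc z hzc]
      exact hz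
    · intro hw
      obtain ⟨hwX, hwc⟩ := Finset.mem_filter.mp hw
      exact ⟨fun i => w i.castSucc, (hmem _).mpr
        (Finset.mem_image.mpr ⟨w, hw, rfl⟩), hsnoc w hwc⟩
  · rw [List.head?_map, hhd]
    simp [hsnoc x hc]

lemma main_aux : ∀ (n : ℕ) (X : Finset (Fin n → Bool))
    (E : (Fin n → Bool) → (Fin n → Bool) → Prop),
    IsPrefixGraph n X E → ∀ x0 ∈ X,
      ∃ L : List (Fin n → Bool),
        IsOrdering X L ∧ IsGenlex L ∧ L.Chain' E ∧ L.head? = some x0 := by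
  intro n
  induction n with
  | zero =>
    intro X E _ x0 hx0
    refine ⟨[x0], ⟨List.nodup_singleton _, ?_⟩, ?_, ?_, rfl⟩
    · intro x
      have hxx : x = x0 := by funext i; exact i.elim0
      subst hxx
      simp [hx0]
    · intro k i j m hij hjm hm hs
      intro i' _
      exact i'.elim0
    · exact List.isChain_singleton _
  | succ n IH =>
    intro X E hpre x0 hx0
    obtain ⟨hpg, hp2⟩ := hpre
    set b := x0 (Fin.last n) with hb
    obtain ⟨A, hAne, ⟨hAnd, hAmem⟩, hAgen, hAch, hAhd⟩ :=
      part_list X E IH hpg b x0 hx0 rfl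
    by_cases hBe : (X.filter (fun z => z (Fin.last n) = !b)).Nonempty
    · set z := A.getLast hAne with hz
      have hzA : z ∈ A := List.getLast_mem hAne
      have hzX := Finset.mem_filter.mp ((hAmem z).mp hzA)
      have hboth : (X.filter (fun x => x (Fin.last n) = false)).Nonempty ∧
          (X.filter (fun x => x (Fin.last n) = true)).Nonempty := by
        have h1 : (X.filter (fun zz => zz (Fin.last n) = b)).Nonempty :=
          ⟨x0, Finset.mem_filter.mpr ⟨hx0, rfl⟩⟩
        cases hbv : b
        · rw [hbv] at h1 hBe; exact ⟨h1, by simpa using hBe⟩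
        · rw [hbv] at h1 hBe; exact ⟨by simpa using hBe, h1⟩
      obtain ⟨y, hyX, hyne, hEzy⟩ := hp2 hboth z hzX.1
      have hyc : y (Fin.last n) = !b := by
        rw [hzX.2] at hyne
        exact bool_eq_not hyne
      obtain ⟨B, hBne, ⟨hBnd, hBmem⟩, hBgen, hBch, hBhd⟩ :=
        part_list X E IH hpg (!b) y hyX hyc
      have hAb : ∀ w ∈ A, w (Fin.last n) = b := fun w hw =>
        (Finset.mem_filter.mp ((hAmem w).mp hw)).2
      have hBb : ∀ w ∈ B, w (Fin.last n) ≠ b := by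
        intro w hw
        have := (Finset.mem_filter.mp ((hBmem w).mp hw)).2
        rw [this]; cases b <;> simp
      refine ⟨A ++ B, ⟨?_, ?_⟩, isGenlex_append b A B hAb hBb hAgen hBgen, ?_, ?_⟩
      · rw [List.nodup_append]
        refine ⟨hAnd, hBnd, ?_⟩
        intro a haA b' haB hab
        subst hab
        exact hBb a haB (hAb a haA)
      · intro w
        rw [List.mem_append, hAmem w, hBmem w]
        simp only [Finset.mem_filter]
        constructor
        · rintro (⟨h, _⟩ | ⟨h, _⟩) <;> exact h
        · intro hw
          by_cases hcw : w (Fin.last n) = b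
          · exact Or.inl ⟨hw, hcw⟩
          · exact Or.inr ⟨hw, bool_eq_not hcw⟩
      · unfold List.Chain'; rw [List.isChain_append]
        refine ⟨hAch, hBch, ?_⟩
        intro u hu v hv
        rw [List.getLast?_eq_getLast hAne] at hu
        rw [hBhd] at hv
        simp only [Option.mem_def, Option.some_inj] at hu hv
        rw [← hu, ← hv]
        exact hEzy
      · cases A with
        | nil => exact absurd rfl hAne
        | cons a as => simpa using hAhd
    · have hXb : ∀ w ∈ X, w (Fin.last n) = b := by
        intro w hw
        by_contra hne
        exact hBe ⟨w, Finset.mem_filter.mpr ⟨hw, bool_eq_not hne⟩⟩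
      refine ⟨A, ⟨hAnd, ?_⟩, hAgen, hAch, hAhd⟩
      intro w
      rw [hAmem w, Finset.mem_filter]
      exact ⟨fun h => h.1, fun h => ⟨h, hXb w h⟩⟩

theorem prefix_graph_genlex_hamPath {n : ℕ} (X : Finset (Fin n → Bool))
    (E : (Fin n → Bool) → (Fin n → Bool) → Prop)
    (hpre : IsPrefixGraph n X E) (x0 : Fin n → Bool) (hx0 : x0 ∈ X) :
    ∃ L : List (Fin n → Bool),
      IsOrdering X L ∧ IsGenlex L ∧ L.Chain' E ∧ L.head? = some x0 := by
  exact main_aux n X E hpre x0 hx0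
end

section
/- Let P = conv(X) be a 0/1-polytope with vertex set X ⊆ {0,1}^n such that X^0 and X^1 are both nonempty (where X^b are vertices with last coordinate b). Fix b ∈ {0,1} and a vertex x ∈ X^b. If y ∈ X^{1-b} minimizes the Hamming distance d(x,y) among all vertices in X^{1-b}, then the segment conv({x,y}) is an edge of P. -/
noncomputable def toVec {n : ℕ} (x : Fin n → Bool) : Fin n → ℝ := fun i => if x i then 1 else 0

def IsPolyEdge {n : ℕ} (X : Finset (Fin n → Bool)) (x y : Fin n → Bool) : Prop :=
  x ≠ y ∧ ∀ ν : ℝ, 0 < ν → ν < 1 →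
    (ν • toVec x + (1 - ν) • toVec y) ∉
      convexHull ℝ (toVec '' (((X.erase x).erase y : Finset (Fin n → Bool)) : Set (Fin n → Bool)))

lemma toVec_term {n : ℕ} (x z : Fin n → Bool) (j : Fin n) :
    (if x j then toVec z j else 1 - toVec z j) = if z j = x j then (1:ℝ) else 0 := by
  simp only [toVec]
  cases hx : x j <;> cases hz : z j <;> simp [hx, hz]

lemma bool_ne_ne {a c d : Bool} (h1 : a ≠ c) (h2 : a ≠ d) : c = d := by
  cases a <;> cases c <;> cases d <;> simp_all

theorem min_hamming_is_edge {n : ℕ} (X : Finset (Fin (n + 1) → Bool))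
    (h0 : (X.filter (fun x => x (Fin.last n) = false)).Nonempty)
    (h1 : (X.filter (fun x => x (Fin.last n) = true)).Nonempty)
    (b : Bool) (x : Fin (n + 1) → Bool) (hx : x ∈ X) (hxb : x (Fin.last n) = b)
    (y : Fin (n + 1) → Bool) (hy : y ∈ X) (hyb : y (Fin.last n) = !b)
    (hmin : ∀ z ∈ X, z (Fin.last n) = !b → hamming x y ≤ hamming x z) :
    IsPolyEdge X x y := by
  classical
  have hxy : x ≠ y := by
    intro h
    rw [h, hyb] at hxb
    cases b <;> simp at hxb
  refine ⟨hxy, ?_⟩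
  intro ν hν0 hν1 hmem
  set S : Finset (Fin (n+1) → Bool) := (X.erase x).erase y with hSdef
  have hinj : Function.Injective (toVec (n := n + 1)) := by
    intro a c h
    funext i
    have hi := congrFun h i
    simp only [toVec] at hi
    cases ha : a i <;> cases hc : c i <;> rw [ha, hc] at hi <;> first | rfl | norm_num at hi
  rw [← Finset.coe_image, Finset.convexHull_eq] at hmem
  obtain ⟨w, hw0, hw1, hwc⟩ := hmem
  set v : (Fin (n+1) → Bool) → ℝ := fun z => w (toVec z) with hvdef
  have hinjS : ∀ a ∈ S, ∀ c ∈ S, toVec a = toVec c → a = c := fun a _ c _ h => hinj h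
  have hw1' : ∑ z ∈ S, v z = 1 := by
    rw [← Finset.sum_image hinjS]; exact hw1
  have hv0 : ∀ z ∈ S, 0 ≤ v z := fun z hz => hw0 _ (Finset.mem_image_of_mem _ hz)
  have him : ∑ i ∈ Finset.image toVec S, w i • id i
      = ∑ z ∈ S, w (toVec z) • id (toVec z) := Finset.sum_image hinjS
  have hp : ∑ z ∈ S, v z • toVec z = ν • toVec x + (1 - ν) • toVec y := by
    rw [Finset.centerMass_eq_of_sum_1 _ _ hw1] at hwc
    rw [← hwc, him]
    rfl
  have hcoord : ∀ i, ∑ z ∈ S, v z * toVec z i = ν * toVec x i + (1 - ν) * toVec y i := by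
    intro i
    have h := congrFun hp i
    simpa [Finset.sum_apply] using h
  -- disagreement set
  set D : Finset (Fin (n+1)) := Finset.univ.filter (fun i => x i ≠ y i) with hDdef
  set Dc : Finset (Fin (n+1)) := Finset.univ.filter (fun i => x i = y i) with hDcdef
  set eR : (Fin (n+1) → Bool) → ℝ :=
    fun z => ∑ i ∈ Dc, (if x i then toVec z i else 1 - toVec z i) with heR
  have hterm_le : ∀ (z : Fin (n+1) → Bool) (i : Fin (n+1)),
      (if x i then toVec z i else 1 - toVec z i) ≤ 1 := by
    intro z i
    rw [toVec_term]
    split <;> norm_num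
  have hex : eR x = (Dc.card : ℝ) := by
    have h1 : eR x = ∑ _i ∈ Dc, (1:ℝ) := by
      simp only [heR]
      refine Finset.sum_congr rfl fun i _ => ?_
      rw [toVec_term, if_pos rfl]
    rw [h1]; simp
  have hey : eR y = (Dc.card : ℝ) := by
    have h1 : eR y = ∑ _i ∈ Dc, (1:ℝ) := by
      simp only [heR]
      refine Finset.sum_congr rfl fun i hi => ?_
      have hxi : x i = y i := (Finset.mem_filter.mp hi).2
      rw [toVec_term, if_pos hxi.symm]
    rw [h1]; simp
  have hsum_e : ∑ z ∈ S, v z * eR z = (Dc.card : ℝ) := by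
    have h1 : ∑ z ∈ S, v z * eR z = ν * eR x + (1 - ν) * eR y := by
      simp only [heR, Finset.mul_sum]
      rw [Finset.sum_comm, ← Finset.sum_add_distrib]
      refine Finset.sum_congr rfl fun i _ => ?_
      by_cases hxi : x i = true
      · simp only [if_pos hxi]
        exact hcoord i
      · simp only [if_neg hxi]
        have h2 : ∑ z ∈ S, v z * (1 - toVec z i) = 1 - (ν * toVec x i + (1 - ν) * toVec y i) := by
          simp_rw [mul_sub, mul_one]
          rw [Finset.sum_sub_distrib, hw1', hcoord i]
        rw [h2]; ring
    rw [h1, hex, hey]; ring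
  have heRle : ∀ z, eR z ≤ (Dc.card : ℝ) := by
    intro z
    calc eR z ≤ ∑ _i ∈ Dc, (1:ℝ) := Finset.sum_le_sum (fun i _ => hterm_le z i)
      _ = (Dc.card : ℝ) := by simp
  have hslack : ∀ z ∈ S, v z ≠ 0 → eR z = (Dc.card : ℝ) := by
    have hzero : ∑ z ∈ S, v z * ((Dc.card : ℝ) - eR z) = 0 := by
      simp_rw [mul_sub]
      rw [Finset.sum_sub_distrib, hsum_e, ← Finset.sum_mul, hw1', one_mul, sub_self]
    intro z hz hvz
    have hnn : ∀ z ∈ S, 0 ≤ v z * ((Dc.card : ℝ) - eR z) :=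
      fun z hz => mul_nonneg (hv0 z hz) (sub_nonneg.mpr (heRle z))
    have h := (Finset.sum_eq_zero_iff_of_nonneg hnn).mp hzero z hz
    rcases mul_eq_zero.mp h with h' | h'
    · exact absurd h' hvz
    · linarith
  have hagree : ∀ z ∈ S, v z ≠ 0 → ∀ i, x i = y i → z i = x i := by
    intro z hz hvz i hi
    have he := hslack z hz hvz
    have hall : ∀ j ∈ Dc, (if x j then toVec z j else 1 - toVec z j) = 1 := by
      by_contra hc
      push_neg at hc
      obtain ⟨j, hj, hne⟩ := hc
      have hlt : (if x j then toVec z j else 1 - toVec z j) < 1 :=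
        lt_of_le_of_ne (hterm_le z j) hne
      have : eR z < (Dc.card : ℝ) := by
        calc eR z < ∑ _i ∈ Dc, (1:ℝ) :=
              Finset.sum_lt_sum (fun i _ => hterm_le z i) ⟨j, hj, hlt⟩
          _ = (Dc.card : ℝ) := by simp
      linarith
    have hiDc : i ∈ Dc := by simp [hDcdef, hi]
    have h := hall i hiDc
    rw [toVec_term] at h
    by_contra hne
    rw [if_neg hne] at h
    norm_num at h
  have hside : ∀ z ∈ S, v z ≠ 0 → z (Fin.last n) = b := by
    intro z hz hvz
    by_contra hzb
    have hzb' : z (Fin.last n) = !b := by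
      cases hbv : b <;> rw [hbv] at hzb <;> simpa using hzb
    have hzy : z ≠ y := Finset.ne_of_mem_erase hz
    have hzX : z ∈ X := Finset.mem_of_mem_erase (Finset.mem_of_mem_erase hz)
    have hge := hmin z hzX hzb'
    have hsub : Finset.univ.filter (fun i => x i ≠ z i) ⊆ D := by
      intro i hi
      simp only [Finset.mem_filter, Finset.mem_univ, true_and] at hi
      simp only [hDdef, Finset.mem_filter, Finset.mem_univ, true_and]
      intro hxyeq
      exact hi (hagree z hz hvz i hxyeq).symm
    have heq : Finset.univ.filter (fun i => x i ≠ z i) = D :=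
      Finset.eq_of_subset_of_card_le hsub hge
    apply hzy
    funext i
    by_cases hiD : x i = y i
    · rw [hagree z hz hvz i hiD, hiD]
    · have h1 : x i ≠ z i := by
        have hiD' : i ∈ D := by simp [hDdef, hiD]
        rw [← heq] at hiD'
        simpa using hiD'
      exact bool_ne_ne h1 hiD
  -- last coordinate contradiction
  have hlast := hcoord (Fin.last n)
  have hL : ∑ z ∈ S, v z * toVec z (Fin.last n) = (if b then (1:ℝ) else 0) := by
    have h1 : ∑ z ∈ S, v z * toVec z (Fin.last n)
        = ∑ z ∈ S, v z * (if b then (1:ℝ) else 0) := by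
      refine Finset.sum_congr rfl fun z hz => ?_
      by_cases hvz : v z = 0
      · simp [hvz]
      · have hb := hside z hz hvz
        simp only [toVec, hb]
    rw [h1, ← Finset.sum_mul, hw1', one_mul]
  rw [hL] at hlast
  cases b with
  | false =>
    simp only [Bool.not_false] at hyb
    have hx' : toVec x (Fin.last n) = 0 := by simp [toVec, hxb]
    have hy' : toVec y (Fin.last n) = 1 := by simp [toVec, hyb]
    rw [hx', hy'] at hlast
    norm_num at hlast
    linarith
  | true =>
    simp only [Bool.not_true] at hyb
    have hx' : toVec x (Fin.last n) = 1 := by simp [toVec, hxb]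
    have hy' : toVec y (Fin.last n) = 0 := by simp [toVec, hyb]
    rw [hx', hy'] at hlast
    norm_num at hlast
    linarith
end

section
/- The skeleton of any 0/1-polytope is a prefix graph. That is, for any X ⊆ {0,1}^n, the graph G = (X, E) where E consists of the pairs of vertices joined by an edge of conv(X) is a prefix graph. -/
section Minkowski

variable {E : Type*} [AddCommGroup E] [Module ℝ E]

open Finset

lemma finset_erase_comm {α : Type*} [DecidableEq α] (S : Finset α) (a b : α) :
    (S.erase a).erase b = (S.erase b).erase a := by
  ext x; simp only [Finset.mem_erase]; tauto

lemma essential_of_essential_erase [DecidableEq E] {S : Finset E} {s s' : E}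
    (hs : s ∈ S) (hs' : s' ∈ S) (hne : s' ≠ s)
    (hsin : s ∈ convexHull ℝ ((S.erase s : Finset E) : Set E))
    (h : s' ∉ convexHull ℝ (((S.erase s).erase s' : Finset E) : Set E)) :
    s' ∉ convexHull ℝ ((S.erase s' : Finset E) : Set E) := by
  intro hmem
  set T : Finset E := (S.erase s').erase s with hT
  have hTT : (S.erase s).erase s' = T := finset_erase_comm _ _ _
  rw [hTT] at h
  rcases T.eq_empty_or_nonempty with hTe | ⟨t, ht⟩
  · have hsub : S.erase s ⊆ {s'} := by
      intro a ha
      rcases Finset.mem_erase.mp ha with ⟨has, haS⟩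
      by_contra hane
      have : a ∈ T := by
        rw [hT]
        exact Finset.mem_erase.mpr ⟨has, Finset.mem_erase.mpr ⟨by simpa using hane, haS⟩⟩
      simp [hTe] at this
    have hs1 : s ∈ convexHull ℝ ({s'} : Set E) := by
      refine convexHull_mono ?_ hsin
      intro a ha
      simpa using hsub ha
    rw [convexHull_singleton, Set.mem_singleton_iff] at hs1
    exact hne hs1.symm
  · have hTne : (T : Set E).Nonempty := ⟨t, ht⟩
    have hins' : (S.erase s' : Set E) = insert s (T : Set E) := by
      rw [hT, ← Finset.coe_insert, Finset.insert_erase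
        (Finset.mem_erase.mpr ⟨fun hh => hne hh.symm, hs⟩)]
    rw [hins', convexHull_insert hTne, mem_convexJoin] at hmem
    obtain ⟨a, ha, c, hc, hseg⟩ := hmem
    rw [Set.mem_singleton_iff] at ha
    rw [ha] at hseg
    obtain ⟨l, l', hl, hl', hll, heq1⟩ := hseg
    have hins : (S.erase s : Set E) = insert s' (T : Set E) := by
      rw [hT, finset_erase_comm, ← Finset.coe_insert, Finset.insert_erase
        (Finset.mem_erase.mpr ⟨hne, hs'⟩)]
    rw [hins, convexHull_insert hTne, mem_convexJoin] at hsin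
    obtain ⟨a2, ha2, d, hd, hseg2⟩ := hsin
    rw [Set.mem_singleton_iff] at ha2
    rw [ha2] at hseg2
    obtain ⟨m, m', hm, hm', hmm, heq2⟩ := hseg2
    -- heq1 : l • s + l' • c = s',  heq2 : m • s' + m' • d = s
    have key : (1 - l * m) • s' = (l * m') • d + l' • c := by
      have h1 : s' = (l * m) • s' + ((l * m') • d + l' • c) := by
        calc s' = l • s + l' • c := heq1.symm
          _ = l • (m • s' + m' • d) + l' • c := by rw [heq2]
          _ = (l * m) • s' + ((l * m') • d + l' • c) := by
              rw [smul_add, smul_smul, smul_smul, add_assoc]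
      rw [sub_smul, one_smul]
      nth_rewrite 1 [h1]
      abel
    rcases eq_or_lt_of_le (by nlinarith : l * m ≤ 1) with hlm | hlm
    · have hl1 : l = 1 := by nlinarith
      have hl'0 : l' = 0 := by nlinarith
      have : s' = s := by
        rw [← heq1, hl1, hl'0, one_smul, zero_smul, add_zero]
      exact hne this
    · set t0 : ℝ := 1 - l * m with ht0
      have ht0pos : 0 < t0 := by simp only [ht0]; linarith
      have hs'eq : s' = (t0⁻¹ * (l * m')) • d + (t0⁻¹ * l') • c := by
        have h2 : s' = t0⁻¹ • (t0 • s') := by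
          rw [smul_smul, inv_mul_cancel₀ (ne_of_gt ht0pos), one_smul]
        rw [h2, key, smul_add, smul_smul, smul_smul]
      have hsum : t0⁻¹ * (l * m') + t0⁻¹ * l' = 1 := by
        have h3 : l * m' + l' = t0 := by simp only [ht0]; nlinarith
        field_simp
        linarith [h3]
      have : s' ∈ convexHull ℝ (T : Set E) := by
        rw [hs'eq]
        exact (convex_convexHull ℝ (T : Set E)) hd hc
          (by positivity) (by positivity) hsum
      exact h this

lemma minkowski_essential [DecidableEq E] (S : Finset E) :
    ∀ p ∈ convexHull ℝ (S : Set E),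
      p ∈ convexHull ℝ {s : E | s ∈ S ∧ s ∉ convexHull ℝ ((S.erase s : Finset E) : Set E)} := by
  classical
  induction S using Finset.strongInduction with
  | _ S IH =>
    intro p hp
    by_cases hall : ∀ s ∈ S, s ∉ convexHull ℝ ((S.erase s : Finset E) : Set E)
    · have hset : {s : E | s ∈ S ∧ s ∉ convexHull ℝ ((S.erase s : Finset E) : Set E)}
          = (S : Set E) := by
        ext a; simp only [Set.mem_setOf_eq, Finset.mem_coe]
        exact ⟨fun h => h.1, fun h => ⟨h, hall a h⟩⟩
      rw [hset]; exact hp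
    · push_neg at hall
      obtain ⟨s, hs, hsin⟩ := hall
      have hSS : convexHull ℝ (S : Set E) ⊆ convexHull ℝ ((S.erase s : Finset E) : Set E) := by
        apply convexHull_min _ (convex_convexHull _ _)
        intro a ha
        by_cases has : a = s
        · subst has; exact hsin
        · exact subset_convexHull _ _ (Finset.mem_coe.mpr
            (Finset.mem_erase.mpr ⟨has, Finset.mem_coe.mp ha⟩))
      have hp' : p ∈ convexHull ℝ ((S.erase s : Finset E) : Set E) := hSS hp
      have hind := IH (S.erase s) (Finset.erase_ssubset hs) p hp'
      refine convexHull_mono ?_ hind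
      intro a ha
      obtain ⟨haS, hane⟩ := ha
      have haS' : a ∈ S := Finset.mem_of_mem_erase haS
      have hanes : a ≠ s := (Finset.mem_erase.mp haS).1
      exact ⟨haS', essential_of_essential_erase hs haS' hanes hsin hane⟩

end Minkowski

section Geom

variable {m : ℕ}

lemma toVec_injective : Function.Injective (toVec (n := m)) := by
  intro a b h
  funext i
  have hi := congrFun h i
  simp only [toVec] at hi
  cases ha : a i <;> cases hb : b i <;> simp [ha, hb] at hi <;> rfl

lemma hamming_cast (x y : Fin m → Bool) :
    (hamming x y : ℝ) = ∑ i, (if x i = y i then (0:ℝ) else 1) := by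
  rw [hamming, Finset.card_filter]
  push_cast
  apply Finset.sum_congr rfl
  intro i _
  by_cases h : x i = y i <;> simp [h]

lemma hamming_pos {x y : Fin m → Bool} (h : x ≠ y) : 0 < hamming x y := by
  rw [hamming, Finset.card_pos]
  have hex : ∃ i, x i ≠ y i := by
    by_contra hc
    push_neg at hc
    exact h (funext hc)
  obtain ⟨i, hi⟩ := hex
  exact ⟨i, by simp [hi]⟩

noncomputable def ellMap (x : Fin m → Bool) : (Fin m → ℝ) →ₗ[ℝ] ℝ :=
  ∑ i, (if x i then (-1 : ℝ) else 1) • (LinearMap.proj i : ((Fin m → ℝ) →ₗ[ℝ] ℝ))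

lemma ellMap_apply (x : Fin m → Bool) (v : Fin m → ℝ) :
    ellMap x v = ∑ i, (if x i then (-1 : ℝ) else 1) * v i := by
  rw [ellMap, LinearMap.sum_apply]
  apply Finset.sum_congr rfl
  intro i _
  rw [LinearMap.smul_apply, LinearMap.proj_apply, smul_eq_mul]

lemma ellMap_diff (x y : Fin m → Bool) :
    ellMap x (toVec y - toVec x) = hamming x y := by
  rw [ellMap_apply, hamming_cast]
  apply Finset.sum_congr rfl
  intro i _
  simp only [Pi.sub_apply, toVec]
  cases hx : x i <;> cases hy : y i <;> norm_num [hx, hy]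

noncomputable def fhat (x y : Fin m → Bool) : Fin m → ℝ :=
  toVec x + (hamming x y : ℝ)⁻¹ • (toVec y - toVec x)

lemma fhat_inj {x y z : Fin m → Bool} (hy : y ≠ x) (hz : z ≠ x)
    (h : fhat x y = fhat x z) : y = z := by
  have hhy : (0:ℝ) < (hamming x y : ℝ) := by exact_mod_cast hamming_pos (Ne.symm hy)
  have hhz : (0:ℝ) < (hamming x z : ℝ) := by exact_mod_cast hamming_pos (Ne.symm hz)
  have h1 : (hamming x y : ℝ)⁻¹ • (toVec y - toVec x)
      = (hamming x z : ℝ)⁻¹ • (toVec z - toVec x) := by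
    have h2 := h
    unfold fhat at h2
    exact add_left_cancel h2
  have hyinv : (0:ℝ) < (hamming x y : ℝ)⁻¹ := inv_pos.mpr hhy
  have hzinv : (0:ℝ) < (hamming x z : ℝ)⁻¹ := inv_pos.mpr hhz
  have hpy : 0 < hamming x y := hamming_pos (Ne.symm hy)
  have hpz : 0 < hamming x z := hamming_pos (Ne.symm hz)
  funext i
  have e := congrFun h1 i
  simp only [Pi.smul_apply, Pi.sub_apply, smul_eq_mul, toVec] at e
  cases hxi : x i <;> cases hyi : y i <;> cases hzi : z i <;>
    first
      | rfl
      | (exfalso; simp only [hxi, hyi, hzi] at e; norm_num at e; omega)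
      | (exfalso; simp only [hxi, hyi, hzi] at e; norm_num at e; nlinarith [hyinv, hzinv])

lemma exists_weights {F : Finset (Fin m → Bool)} {p : Fin m → ℝ}
    (hp : p ∈ convexHull ℝ (toVec '' (F : Set (Fin m → Bool)))) :
    ∃ μ : (Fin m → Bool) → ℝ, (∀ z ∈ F, 0 ≤ μ z) ∧ (∑ z ∈ F, μ z) = 1 ∧
      (∑ z ∈ F, μ z • toVec z) = p := by
  classical
  rw [← Finset.coe_image, Finset.mem_convexHull'] at hp
  obtain ⟨w, hw0, hw1, hwp⟩ := hp
  refine ⟨fun z => w (toVec z), ?_, ?_, ?_⟩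
  · intro z hz
    exact hw0 _ (Finset.mem_image_of_mem _ hz)
  · rw [← hw1]
    exact (Finset.sum_image (f := w) (fun a _ b _ hab => toVec_injective hab)).symm
  · rw [← hwp]
    exact (Finset.sum_image (f := fun v => w v • v) (fun a _ b _ hab => toVec_injective hab)).symm

end Geom

section EdgeC

variable {n : ℕ}

lemma exists_opposite_edge (X : Finset (Fin (n+1) → Bool)) (x w : Fin (n+1) → Bool)
    (hx : x ∈ X) (hw : w ∈ X) (hne : w (Fin.last n) ≠ x (Fin.last n)) :
    ∃ y ∈ X, y (Fin.last n) ≠ x (Fin.last n) ∧ IsPolyEdge X x y := by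
  classical
  set S : Finset (Fin (n+1) → ℝ) := (X.erase x).image (fhat x) with hS
  have hwx : w ≠ x := fun h => hne (by rw [h])
  have hwX : w ∈ X.erase x := Finset.mem_erase.mpr ⟨hwx, hw⟩
  have hwS : fhat x w ∈ S := Finset.mem_image_of_mem _ hwX
  have hmink := minkowski_essential S (fhat x w) (subset_convexHull ℝ _ hwS)
  set Ess : Set (Fin (n+1) → ℝ) :=
    {s : Fin (n+1) → ℝ | s ∈ S ∧ s ∉ convexHull ℝ ((S.erase s : Finset _) : Set _)} with hEss
  have hwpos : (0:ℝ) < (hamming x w : ℝ) := by exact_mod_cast hamming_pos (Ne.symm hwx)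
  have hexists : ∃ e ∈ Ess, e (Fin.last n) ≠ toVec x (Fin.last n) := by
    by_contra hc
    push_neg at hc
    have hsub : Ess ⊆ {v : Fin (n+1) → ℝ | v (Fin.last n) = toVec x (Fin.last n)} := by
      intro e he; exact hc e he
    have hconv : Convex ℝ {v : Fin (n+1) → ℝ | v (Fin.last n) = toVec x (Fin.last n)} := by
      intro u hu v hv a b ha hb hab
      simp only [Set.mem_setOf_eq] at hu hv ⊢
      simp only [Pi.add_apply, Pi.smul_apply, smul_eq_mul, hu, hv]
      rw [← add_mul, hab, one_mul]
    have hmem2 := convexHull_min hsub hconv hmink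
    simp only [Set.mem_setOf_eq, fhat, Pi.add_apply, Pi.smul_apply, Pi.sub_apply,
      smul_eq_mul] at hmem2
    have hd : toVec w (Fin.last n) - toVec x (Fin.last n) ≠ 0 := by
      simp only [toVec]
      cases hxl : x (Fin.last n) <;> cases hwl : w (Fin.last n) <;> simp_all
    have : (hamming x w : ℝ)⁻¹ * (toVec w (Fin.last n) - toVec x (Fin.last n)) = 0 := by
      linarith [hmem2]
    rcases mul_eq_zero.mp this with h1 | h1
    · exact absurd h1 (ne_of_gt (inv_pos.mpr hwpos))
    · exact hd h1
  obtain ⟨e, ⟨heS, hess⟩, helast⟩ := hexists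
  obtain ⟨y, hyX, hye⟩ := Finset.mem_image.mp heS
  subst hye
  have hyx : y ≠ x := (Finset.mem_erase.mp hyX).1
  have hyham : (0:ℝ) < (hamming x y : ℝ) := by exact_mod_cast hamming_pos (Ne.symm hyx)
  have hylast : y (Fin.last n) ≠ x (Fin.last n) := by
    intro hl
    apply helast
    simp only [fhat, Pi.add_apply, Pi.smul_apply, Pi.sub_apply, smul_eq_mul]
    have : toVec y (Fin.last n) = toVec x (Fin.last n) := by simp [toVec, hl]
    rw [this]
    ring
  refine ⟨y, Finset.mem_of_mem_erase hyX, hylast, fun h => hyx h.symm, ?_⟩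
  intro ν hν0 hν1 hmem
  obtain ⟨μ, hμ0, hμ1, hμp⟩ := exists_weights hmem
  set F := (X.erase x).erase y with hF
  have hsub : (∑ z ∈ F, μ z • (toVec z - toVec x)) = (1-ν) • (toVec y - toVec x) := by
    have h4 : (∑ z ∈ F, μ z • (toVec z - toVec x))
        = (∑ z ∈ F, μ z • toVec z) - (∑ z ∈ F, μ z) • toVec x := by
      rw [Finset.sum_smul, ← Finset.sum_sub_distrib]
      apply Finset.sum_congr rfl
      intro z _
      rw [smul_sub]
    rw [h4, hμ1, hμp, one_smul]
    module
  have hν1' : (0:ℝ) < 1 - ν := by linarith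
  set D : ℝ := (1-ν) * (hamming x y : ℝ) with hD
  have hDpos : 0 < D := by positivity
  set c : (Fin (n+1) → Bool) → ℝ := fun z => μ z * (hamming x z : ℝ) / D with hc
  have hc0 : ∀ z ∈ F, 0 ≤ c z := by
    intro z hz
    apply div_nonneg _ (le_of_lt hDpos)
    exact mul_nonneg (hμ0 z hz) (Nat.cast_nonneg _)
  have hsumμh : (∑ z ∈ F, μ z * (hamming x z : ℝ)) = D := by
    have h1 : (∑ z ∈ F, μ z * (hamming x z : ℝ))
        = ellMap x (∑ z ∈ F, μ z • (toVec z - toVec x)) := by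
      rw [map_sum]
      apply Finset.sum_congr rfl
      intro z _
      rw [map_smul, ellMap_diff, smul_eq_mul]
    rw [h1, hsub, map_smul, ellMap_diff, smul_eq_mul, hD]
  have hcsum : (∑ z ∈ F, c z) = 1 := by
    simp only [hc]
    rw [← Finset.sum_div, hsumμh]
    field_simp
  have hfy : (∑ z ∈ F, c z • fhat x z) = fhat x y := by
    have expand : ∀ z ∈ F, c z • fhat x z
        = c z • toVec x + (μ z / D) • (toVec z - toVec x) := by
      intro z hz
      have hzx : z ≠ x := (Finset.mem_erase.mp (Finset.mem_of_mem_erase hz)).1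
      have hzham : (0:ℝ) < (hamming x z : ℝ) := by exact_mod_cast hamming_pos (Ne.symm hzx)
      have hcoef : c z * (hamming x z : ℝ)⁻¹ = μ z / D := by
        simp only [hc]
        field_simp
      calc c z • fhat x z
          = c z • toVec x + c z • ((hamming x z : ℝ)⁻¹ • (toVec z - toVec x)) := by
            rw [fhat, smul_add]
        _ = c z • toVec x + (c z * (hamming x z : ℝ)⁻¹) • (toVec z - toVec x) := by
            rw [smul_smul]
        _ = c z • toVec x + (μ z / D) • (toVec z - toVec x) := by rw [hcoef]
    have hsum1 : (∑ z ∈ F, c z • fhat x z)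
        = ∑ z ∈ F, (c z • toVec x + (μ z / D) • (toVec z - toVec x)) :=
      Finset.sum_congr rfl expand
    rw [hsum1, Finset.sum_add_distrib, ← Finset.sum_smul, hcsum, one_smul]
    have h5 : (∑ z ∈ F, (μ z / D) • (toVec z - toVec x))
        = D⁻¹ • ∑ z ∈ F, μ z • (toVec z - toVec x) := by
      rw [Finset.smul_sum]
      apply Finset.sum_congr rfl
      intro z _
      rw [smul_smul, div_eq_inv_mul]
    rw [h5, hsub, smul_smul]
    have h6 : D⁻¹ * (1-ν) = (hamming x y : ℝ)⁻¹ := by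
      rw [hD, mul_inv]
      field_simp
    rw [h6, fhat]
  apply hess
  have hpoints : ∀ z ∈ F, fhat x z ∈ ((S.erase (fhat x y) : Finset _) : Set (Fin (n+1) → ℝ)) := by
    intro z hz
    obtain ⟨hzy, hzXx⟩ := Finset.mem_erase.mp hz
    have hzS : fhat x z ∈ S := Finset.mem_image_of_mem _ hzXx
    have hzx : z ≠ x := (Finset.mem_erase.mp hzXx).1
    refine Finset.mem_coe.mpr (Finset.mem_erase.mpr ⟨?_, hzS⟩)
    intro heq
    exact hzy (fhat_inj hzx hyx heq)
  have hCM := Finset.centerMass_mem_convexHull F hc0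
    (by rw [hcsum]; exact one_pos) hpoints
  rw [Finset.centerMass_eq_of_sum_1 _ _ hcsum] at hCM
  rw [hfy] at hCM
  exact hCM

end EdgeC

section Combo

lemma snoc_trunc {n : ℕ} (z : Fin (n+1) → Bool) (b : Bool) (hzb : z (Fin.last n) = b) :
    Fin.snoc (fun i : Fin n => z i.castSucc) b = z := by
  funext i
  refine Fin.lastCases ?_ ?_ i
  · rw [Fin.snoc_last, hzb]
  · intro j
    rw [Fin.snoc_castSucc]

lemma mem_child {n : ℕ} {X : Finset (Fin (n+1) → Bool)} {b : Bool} {x' : Fin n → Bool} :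
    x' ∈ (X.filter (fun x => x (Fin.last n) = b)).image (fun x => fun i : Fin n => x i.castSucc)
      ↔ Fin.snoc x' b ∈ X := by
  constructor
  · intro h
    obtain ⟨z, hz, hzx⟩ := Finset.mem_image.mp h
    obtain ⟨hzX, hzb⟩ := Finset.mem_filter.mp hz
    have hzz : Fin.snoc x' b = z := by
      rw [← hzx]
      exact snoc_trunc z b hzb
    rw [hzz]
    exact hzX
  · intro h
    refine Finset.mem_image.mpr ⟨Fin.snoc x' b,
      Finset.mem_filter.mpr ⟨h, by simp [Fin.snoc_last]⟩, ?_⟩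
    funext i
    rw [Fin.snoc_castSucc]

lemma toVec_last_snoc {n : ℕ} (x' : Fin n → Bool) (b : Bool) :
    toVec (Fin.snoc x' b) (Fin.last n) = (if b then (1:ℝ) else 0) := by
  simp [toVec, Fin.snoc_last]

lemma toVec_castSucc_snoc {n : ℕ} (x' : Fin n → Bool) (b : Bool) (i : Fin n) :
    toVec (Fin.snoc x' b) (Fin.castSucc i) = toVec x' i := by
  simp [toVec, Fin.snoc_castSucc]

lemma edge_lift {n : ℕ} (X : Finset (Fin (n+1) → Bool)) (b : Bool) (x' y' : Fin n → Bool)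
    (hx : Fin.snoc x' b ∈ X) (hy : Fin.snoc y' b ∈ X)
    (h : IsPolyEdge
      ((X.filter (fun x => x (Fin.last n) = b)).image (fun x => fun i : Fin n => x i.castSucc))
      x' y') :
    IsPolyEdge X (Fin.snoc x' b) (Fin.snoc y' b) := by
  classical
  obtain ⟨hne', hsep⟩ := h
  set X' := (X.filter (fun x => x (Fin.last n) = b)).image
    (fun x => fun i : Fin n => x i.castSucc) with hX'
  constructor
  · intro hEq
    apply hne'
    funext i
    have := congrFun hEq (Fin.castSucc i)
    rwa [Fin.snoc_castSucc, Fin.snoc_castSucc] at this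
  · intro ν hν0 hν1 hmem
    obtain ⟨μ, hμ0, hμ1, hμp⟩ := exists_weights hmem
    set F := (X.erase (Fin.snoc x' b)).erase (Fin.snoc y' b) with hF
    have hlast : ∑ z ∈ F, μ z * toVec z (Fin.last n) = (if b then (1:ℝ) else 0) := by
      have h1 := congrFun hμp (Fin.last n)
      rw [Finset.sum_apply] at h1
      simp only [Pi.add_apply, Pi.smul_apply, smul_eq_mul] at h1
      rw [toVec_last_snoc, toVec_last_snoc] at h1
      rw [h1]
      cases b <;> norm_num
    have hzero : ∀ z ∈ F, z (Fin.last n) ≠ b → μ z = 0 := by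
      intro z hz hzb
      cases b
      case false =>
        have hterms : ∀ t ∈ F, 0 ≤ μ t * toVec t (Fin.last n) := by
          intro t ht
          apply mul_nonneg (hμ0 t ht)
          by_cases h : t (Fin.last n) = true <;> simp [toVec, h]
        have h0 := (Finset.sum_eq_zero_iff_of_nonneg hterms).mp (by
          rw [hlast]; simp) z hz
        have hv : toVec z (Fin.last n) = 1 := by
          have : z (Fin.last n) = true := by
            cases hzl : z (Fin.last n)
            · exact absurd hzl hzb
            · rfl
          simp [toVec, this]
        rw [hv, mul_one] at h0
        exact h0
      case true =>
        have hterms : ∀ t ∈ F, 0 ≤ μ t * (1 - toVec t (Fin.last n)) := by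
          intro t ht
          apply mul_nonneg (hμ0 t ht)
          by_cases h : t (Fin.last n) = true <;> simp [toVec, h]
        have hsum0 : ∑ t ∈ F, μ t * (1 - toVec t (Fin.last n)) = 0 := by
          have hdist : ∑ t ∈ F, μ t * (1 - toVec t (Fin.last n))
              = (∑ t ∈ F, μ t) - ∑ t ∈ F, μ t * toVec t (Fin.last n) := by
            rw [← Finset.sum_sub_distrib]
            apply Finset.sum_congr rfl
            intro t _
            ring
          rw [hdist, hμ1, hlast]
          simp
        have h0 := (Finset.sum_eq_zero_iff_of_nonneg hterms).mp hsum0 z hz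
        have hv : toVec z (Fin.last n) = 0 := by
          have : z (Fin.last n) = false := by
            cases hzl : z (Fin.last n)
            · rfl
            · exact absurd hzl hzb
          simp [toVec, this]
        rw [hv] at h0
        simp at h0
        exact h0
    set F1 := F.filter (fun z => z (Fin.last n) = b) with hF1
    have hsub1 : ∀ g : (Fin (n+1) → Bool) → ℝ,
        (∑ z ∈ F1, μ z * g z) = ∑ z ∈ F, μ z * g z := by
      intro g
      apply Finset.sum_subset (Finset.filter_subset _ _)
      intro z hz hz1
      have : μ z = 0 := by
        apply hzero z hz
        intro hb
        exact hz1 (Finset.mem_filter.mpr ⟨hz, hb⟩)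
      rw [this, zero_mul]
    have hμ1' : ∑ z ∈ F1, μ z = 1 := by
      have := hsub1 (fun _ => 1)
      simpa [hμ1] using this
    have hproj : ∑ z ∈ F1, μ z • toVec (fun i : Fin n => z i.castSucc)
        = ν • toVec x' + (1-ν) • toVec y' := by
      funext i
      rw [Finset.sum_apply]
      simp only [Pi.smul_apply, Pi.add_apply, smul_eq_mul]
      have h1 := congrFun hμp (Fin.castSucc i)
      rw [Finset.sum_apply] at h1
      simp only [Pi.add_apply, Pi.smul_apply, smul_eq_mul] at h1
      rw [toVec_castSucc_snoc, toVec_castSucc_snoc] at h1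
      have h2 : ∀ z : Fin (n+1) → Bool,
          toVec (fun i : Fin n => z i.castSucc) i = toVec z (Fin.castSucc i) := by
        intro z; simp [toVec]
      calc ∑ z ∈ F1, μ z * toVec (fun i : Fin n => z i.castSucc) i
          = ∑ z ∈ F1, μ z * toVec z (Fin.castSucc i) := by
            apply Finset.sum_congr rfl; intro z _; rw [h2]
        _ = ∑ z ∈ F, μ z * toVec z (Fin.castSucc i) := hsub1 _
        _ = ν * toVec x' i + (1-ν) * toVec y' i := h1
    apply hsep ν hν0 hν1
    have hpts : ∀ z ∈ F1, toVec (fun i : Fin n => z i.castSucc)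
        ∈ (toVec '' (((X'.erase x').erase y' : Finset (Fin n → Bool)) : Set (Fin n → Bool))) := by
      intro z hz
      obtain ⟨hzF, hzb⟩ := Finset.mem_filter.mp hz
      have hzX : z ∈ X := Finset.mem_of_mem_erase (Finset.mem_of_mem_erase hzF)
      have hzy : z ≠ Fin.snoc y' b := (Finset.mem_erase.mp hzF).1
      have hzx : z ≠ Fin.snoc x' b := (Finset.mem_erase.mp (Finset.mem_of_mem_erase hzF)).1
      refine ⟨fun i => z i.castSucc, ?_, rfl⟩
      refine Finset.mem_coe.mpr (Finset.mem_erase.mpr ⟨?_, Finset.mem_erase.mpr ⟨?_, ?_⟩⟩)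
      · intro heq
        apply hzy
        rw [← snoc_trunc z b hzb, heq]
      · intro heq
        apply hzx
        rw [← snoc_trunc z b hzb, heq]
      · rw [hX', mem_child, snoc_trunc z b hzb]
        exact hzX
    have hCM := Finset.centerMass_mem_convexHull F1 (fun z hz => hμ0 z (Finset.mem_of_mem_filter z hz))
      (by rw [hμ1']; exact one_pos) hpts
    rw [Finset.centerMass_eq_of_sum_1 _ _ hμ1'] at hCM
    rw [hproj] at hCM
    exact hCM

lemma prefix_mono (n : ℕ) : ∀ (X : Finset (Fin n → Bool))
    (E E' : (Fin n → Bool) → (Fin n → Bool) → Prop),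
    (∀ x ∈ X, ∀ y ∈ X, E x y → E' x y) → IsPrefixGraph n X E → IsPrefixGraph n X E' := by
  induction n with
  | zero =>
    intro X E E' h hp
    exact trivial
  | succ n IH =>
    intro X E E' h hp
    obtain ⟨h1, h2⟩ := hp
    refine ⟨?_, ?_⟩
    · intro b
      refine IH _ _ _ ?_ (h1 b)
      intro x' hx' y' hy' hE
      exact h _ (mem_child.mp hx') _ (mem_child.mp hy') hE
    · intro hne x hx
      obtain ⟨y, hy, hyne, hE⟩ := h2 hne x hx
      exact ⟨y, hy, hyne, h x hx y hy hE⟩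

end Combo


theorem skeleton_is_prefix_graph (n : ℕ) (X : Finset (Fin n → Bool)) :
    IsPrefixGraph n X (IsPolyEdge X) := by
  induction n with
  | zero => exact trivial
  | succ n IH =>
    refine ⟨?_, ?_⟩
    · intro b
      refine prefix_mono n _ _ _ ?_ (IH _)
      intro x' hx' y' hy' hE
      exact edge_lift X b x' y' (mem_child.mp hx') (mem_child.mp hy') hE
    · rintro ⟨h0, h1⟩ x hx
      rcases Bool.eq_false_or_eq_true (x (Fin.last n)) with hxb | hxb
      · obtain ⟨w, hw⟩ := h0
        obtain ⟨hwX, hwb⟩ := Finset.mem_filter.mp hw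
        exact exists_opposite_edge X x w hx hwX (by rw [hwb, hxb]; simp)
      · obtain ⟨w, hw⟩ := h1
        obtain ⟨hwX, hwb⟩ := Finset.mem_filter.mp hw
        exact exists_opposite_edge X x w hx hwX (by rw [hwb, hxb]; simp)
end

section
/- Let X ⊆ {0,1}^n, x ∈ X, β ∈ [n], and suppose N := argmin{ d(x,y) : y ∈ X \ {x}, λ(x,y) = β } is nonempty. Define w ∈ {−1,+1}^n by w_i = +1 if x_i = 0 and w_i = −1 if x_i = 1, and define P_b := {β : x_β = 1−b} ∪ {i > β : x_i = b} for b ∈ {0,1}. Then N = argmin{ w·y : y ∈ X, y_i = 0 for all i ∈ P_0, y_i = 1 for all i ∈ P_1 }. -/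
def dotB {n : ℕ} (w : Fin n → ℤ) (y : Fin n → Bool) : ℤ :=
  ∑ i, w i * (if y i then 1 else 0)

theorem closest_vertices_as_LOP {n : ℕ} (X : Finset (Fin n → Bool))
    (x : Fin n → Bool) (hx : x ∈ X)
    (β : ℕ) (hβ1 : 1 ≤ β) (hβn : β ≤ n)
    (w : Fin n → ℤ) (hw : ∀ i, w i = if x i then -1 else 1)
    (P0 P1 : Set (Fin n))
    (hP0 : ∀ i : Fin n, i ∈ P0 ↔
      (((i : ℕ) + 1 = β ∧ x i = true) ∨ ((i : ℕ) + 1 > β ∧ x i = false)))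
    (hP1 : ∀ i : Fin n, i ∈ P1 ↔
      (((i : ℕ) + 1 = β ∧ x i = false) ∨ ((i : ℕ) + 1 > β ∧ x i = true)))
    (hN : ∃ y ∈ X, y ≠ x ∧ lamPos x y = β) :
    {y | y ∈ X ∧ y ≠ x ∧ lamPos x y = β ∧
        ∀ z ∈ X, z ≠ x → lamPos x z = β → hamming x y ≤ hamming x z}
    = {y | y ∈ X ∧ (∀ i ∈ P0, y i = false) ∧ (∀ i ∈ P1, y i = true) ∧
        ∀ z ∈ X, (∀ i ∈ P0, z i = false) → (∀ i ∈ P1, z i = true) →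
          dotB w y ≤ dotB w z} := by

  have dot_eq : ∀ y : Fin n → Bool, dotB w y =
      (hamming x y : ℤ) - (Finset.univ.filter (fun i => x i = true)).card := by
    intro y
    unfold dotB hamming
    rw [Finset.card_filter, Finset.card_filter]
    push_cast
    rw [← Finset.sum_sub_distrib]
    refine Finset.sum_congr rfl (fun i _ => ?_)
    rw [hw]
    cases hxi : x i <;> cases hyi : y i <;> simp [hxi, hyi]
  have dot_le : ∀ y z : Fin n → Bool, (dotB w y ≤ dotB w z ↔ hamming x y ≤ hamming x z) := by
    intro y z
    rw [dot_eq, dot_eq, sub_le_sub_iff_right, Nat.cast_le]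
  set b : Fin n := ⟨β - 1, by omega⟩ with hb
  have hbv : (b : ℕ) + 1 = β := by simp [hb]; omega
  have lam_iff : ∀ y : Fin n → Bool, (y ≠ x ∧ lamPos x y = β) ↔
      (y b ≠ x b ∧ ∀ i : Fin n, β ≤ (i : ℕ) → y i = x i) := by
    intro y
    constructor
    · rintro ⟨hyx, hlam⟩
      have hne : (Finset.univ.filter (fun i : Fin n => x i ≠ y i)).Nonempty := by
        by_contra h
        rw [Finset.not_nonempty_iff_eq_empty, Finset.filter_eq_empty_iff] at h
        apply hyx
        funext i
        have h2 := h (Finset.mem_univ i)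
        simp only [ne_eq, not_not] at h2
        exact h2.symm
      obtain ⟨j, hjmem, hjval⟩ := Finset.exists_mem_eq_sup _ hne (fun i : Fin n => (i : ℕ) + 1)
      have hjval' : lamPos x y = (j : ℕ) + 1 := hjval
      have hjb : j = b := by
        apply Fin.ext
        simp only [hb]
        omega
      constructor
      · rw [← hjb]
        simp only [Finset.mem_filter] at hjmem
        exact fun h => hjmem.2 h.symm
      · intro i hi
        by_contra h
        have hm : i ∈ Finset.univ.filter (fun i : Fin n => x i ≠ y i) := by
          simp only [Finset.mem_filter, Finset.mem_univ, true_and]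
          exact fun h2 => h h2.symm
        have h3 : (i : ℕ) + 1 ≤ lamPos x y :=
          Finset.le_sup (f := fun i : Fin n => (i : ℕ) + 1) hm
        omega
    · rintro ⟨hyb, hagree⟩
      have hyx : y ≠ x := fun h => hyb (by rw [h])
      refine ⟨hyx, ?_⟩
      unfold lamPos
      apply le_antisymm
      · apply Finset.sup_le
        intro i hi
        simp only [Finset.mem_filter, Finset.mem_univ, true_and] at hi
        by_contra h
        exact hi (hagree i (by omega)).symm
      · have hm : b ∈ Finset.univ.filter (fun i : Fin n => x i ≠ y i) := by
          simp only [Finset.mem_filter, Finset.mem_univ, true_and]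
          exact fun h => hyb h.symm
        have h3 : (b : ℕ) + 1 ≤ (Finset.univ.filter (fun i : Fin n => x i ≠ y i)).sup
            (fun i : Fin n => (i : ℕ) + 1) :=
          Finset.le_sup (f := fun i : Fin n => (i : ℕ) + 1) hm
        omega
  have con_iff : ∀ y : Fin n → Bool,
      ((∀ i ∈ P0, y i = false) ∧ (∀ i ∈ P1, y i = true)) ↔
      (y b ≠ x b ∧ ∀ i : Fin n, β ≤ (i : ℕ) → y i = x i) := by
    intro y
    constructor
    · rintro ⟨h0, h1⟩
      constructor
      · cases hxb : x b
        · have : b ∈ P1 := (hP1 b).mpr (Or.inl ⟨hbv, hxb⟩)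
          rw [h1 b this]; simp
        · have : b ∈ P0 := (hP0 b).mpr (Or.inl ⟨hbv, hxb⟩)
          rw [h0 b this]; simp
      · intro i hi
        cases hxi : x i
        · exact h0 i ((hP0 i).mpr (Or.inr ⟨by omega, hxi⟩))
        · exact h1 i ((hP1 i).mpr (Or.inr ⟨by omega, hxi⟩))
    · rintro ⟨hyb, hagree⟩
      constructor
      · intro i hi
        rcases (hP0 i).mp hi with ⟨hiv, hxi⟩ | ⟨hiv, hxi⟩
        · have : i = b := Fin.ext (by simp [hb]; omega)
          subst this
          rw [hxi] at hyb
          simpa using hyb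
        · rw [hagree i (by omega), hxi]
      · intro i hi
        rcases (hP1 i).mp hi with ⟨hiv, hxi⟩ | ⟨hiv, hxi⟩
        · have : i = b := Fin.ext (by simp [hb]; omega)
          subst this
          rw [hxi] at hyb
          simpa using hyb
        · rw [hagree i (by omega), hxi]
  ext y
  simp only [Set.mem_setOf_eq]
  constructor
  · rintro ⟨hyX, hyx, hlam, hmin⟩
    have hc := (con_iff y).mpr ((lam_iff y).mp ⟨hyx, hlam⟩)
    refine ⟨hyX, hc.1, hc.2, ?_⟩
    intro z hzX hz0 hz1
    have hz := (lam_iff z).mpr ((con_iff z).mp ⟨hz0, hz1⟩)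
    rw [dot_le]
    exact hmin z hzX hz.1 hz.2
  · rintro ⟨hyX, hy0, hy1, hmin⟩
    have hy := (lam_iff y).mpr ((con_iff y).mp ⟨hy0, hy1⟩)
    refine ⟨hyX, hy.1, hy.2, ?_⟩
    intro z hzX hzx hzlam
    have hc := (con_iff z).mpr ((lam_iff z).mp ⟨hzx, hzlam⟩)
    rw [← dot_le]
    exact hmin z hzX hc.1 hc.2
end

section
/- Let X ⊆ {0,1}^n, x ∈ X, let I ⊆ [n] be an interval, and α ∈ I. Define w ∈ {−1,0,+1}^n by w_i = −1 if i ≥ min I and x_i = 0, w_i = +1 if i ≥ min I and x_i = 1, and w_i = 0 if i < min I; and define P_b := {i > α : x_i = b} for b ∈ {0,1}. Then min{ w·y : y ∈ X, y_{P_0} = 0, y_{P_1} = 1 } < w·x if and only if there exists y ∈ X \ {x} with λ(x,y) ∈ I and λ(x,y) ≤ α. -/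
lemma dot_diff {n : ℕ} (x y : Fin n → Bool) (m : ℕ) (w : Fin n → ℤ)
    (hw : ∀ i : Fin n, w i = if m ≤ (i : ℕ) + 1 then (if x i then 1 else -1) else 0) :
    dotB w x - dotB w y
      = ((Finset.univ.filter (fun i : Fin n => m ≤ (i : ℕ) + 1 ∧ x i ≠ y i)).card : ℤ) := by
  unfold dotB
  rw [← Finset.sum_sub_distrib, Finset.card_filter]
  push_cast
  apply Finset.sum_congr rfl
  intro i _
  rw [hw i]
  cases hx : x i <;> cases hy : y i <;> split_ifs <;> simp_all

lemma ne_iff_filter {n : ℕ} (x y : Fin n → Bool) :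
    y ≠ x ↔ (Finset.univ.filter (fun i : Fin n => x i ≠ y i)).Nonempty := by
  constructor
  · intro h
    by_contra hne
    apply h
    funext i
    by_contra hc
    exact hne ⟨i, Finset.mem_filter.mpr ⟨Finset.mem_univ i, fun he => hc he.symm⟩⟩
  · rintro ⟨i, hi⟩ rfl
    simp at hi

theorem unseen_branching_as_LOP {n : ℕ} (X : Finset (Fin n → Bool))
    (x : Fin n → Bool) (hx : x ∈ X)
    (I : Finset ℕ) (hIsub : ∀ i ∈ I, 1 ≤ i ∧ i ≤ n)
    (hIint : ∀ a b c : ℕ, a ∈ I → c ∈ I → a ≤ b → b ≤ c → b ∈ I)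
    (α : ℕ) (hα : α ∈ I)
    (w : Fin n → ℤ)
    (hw : ∀ i : Fin n, w i =
      if I.min' ⟨α, hα⟩ ≤ (i : ℕ) + 1 then (if x i then 1 else -1) else 0) :
    (∃ y ∈ X, (∀ i : Fin n, (i : ℕ) + 1 > α → y i = x i) ∧ dotB w y < dotB w x)
    ↔ (∃ y ∈ X, y ≠ x ∧ lamPos x y ∈ I ∧ lamPos x y ≤ α) := by
  set m := I.min' ⟨α, hα⟩ with hm
  have hmI : m ∈ I := I.min'_mem _
  constructor
  · rintro ⟨y, hy, hagree, hlt⟩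
    have hdiff := dot_diff x y m w hw
    have hcard : 0 < (Finset.univ.filter (fun i : Fin n => m ≤ (i : ℕ) + 1 ∧ x i ≠ y i)).card := by
      by_contra h
      push_neg at h
      have h0 : (Finset.univ.filter (fun i : Fin n => m ≤ (i : ℕ) + 1 ∧ x i ≠ y i)).card = 0 := by
        omega
      rw [h0] at hdiff
      simp at hdiff
      omega
    obtain ⟨i, hi⟩ := Finset.card_pos.mp hcard
    simp only [Finset.mem_filter, Finset.mem_univ, true_and] at hi
    have hne : y ≠ x := fun h => hi.2 (by rw [h])
    refine ⟨y, hy, hne, ?_, ?_⟩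
    · -- lamPos x y ∈ I
      have hle : lamPos x y ≤ α := by
        apply Finset.sup_le
        intro j hj
        simp only [Finset.mem_filter, Finset.mem_univ, true_and] at hj
        by_contra hc
        exact hj (by rw [hagree j (by omega)])
      have hge : m ≤ lamPos x y := le_trans hi.1 (Finset.le_sup (f := fun j : Fin n => (j : ℕ) + 1) (by simp [hi.2]))
      exact hIint m _ α hmI hα hge hle
    · apply Finset.sup_le
      intro j hj
      simp only [Finset.mem_filter, Finset.mem_univ, true_and] at hj
      by_contra hc
      exact hj (by rw [hagree j (by omega)])
  · rintro ⟨y, hy, hne, hlI, hlα⟩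
    have hfil := (ne_iff_filter x y).mp hne
    have hagree : ∀ i : Fin n, (i : ℕ) + 1 > α → y i = x i := by
      intro i hi
      by_contra hc
      have : (i : ℕ) + 1 ≤ lamPos x y :=
        Finset.le_sup (f := fun j : Fin n => (j : ℕ) + 1)
          (by simp only [Finset.mem_filter, Finset.mem_univ, true_and]; exact fun h => hc h.symm)
      omega
    refine ⟨y, hy, hagree, ?_⟩
    have hdiff := dot_diff x y m w hw
    obtain ⟨i, hi, hieq⟩ := Finset.exists_mem_eq_sup _ hfil (fun i : Fin n => (i : ℕ) + 1)
    simp only [Finset.mem_filter, Finset.mem_univ, true_and] at hi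
    have hgm : m ≤ (i : ℕ) + 1 := by
      have : m ≤ lamPos x y := I.min'_le _ hlI
      rw [lamPos, hieq] at this
      exact this
    have hcard : 0 < (Finset.univ.filter (fun j : Fin n => m ≤ (j : ℕ) + 1 ∧ x j ≠ y j)).card :=
      Finset.card_pos.mpr ⟨i, by simp [hgm, hi]⟩
    omega
end

section
/- Let X ⊆ {0,1}^n, w ∈ {−1,0,+1}^n, c ∈ Z^n, X_c := argmin{ c·x : x ∈ X }, w' := w + n·c. Suppose β ∈ [n] is such that all elements of X agree in position β (y_β = y'_β for all y, y' ∈ X). Then argmin{ w'·y : y ∈ X_c } = argmin{ w'·y : y ∈ X }. -/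
theorem weight_amplification_ii {n : ℕ} (X : Finset (Fin n → Bool)) (hX : X.Nonempty)
    (w : Fin n → ℤ) (hw : ∀ i, w i ∈ ({-1, 0, 1} : Set ℤ))
    (c : Fin n → ℤ)
    (w' : Fin n → ℤ) (hw' : ∀ i, w' i = w i + n * c i)
    (β : Fin n) (hagree : ∀ y ∈ X, ∀ y' ∈ X, y β = y' β) :
    {y | y ∈ X ∧ (∀ z ∈ X, dotB c y ≤ dotB c z) ∧
        ∀ z ∈ X, (∀ z' ∈ X, dotB c z ≤ dotB c z') → dotB w' y ≤ dotB w' z}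
    = {y | y ∈ X ∧ ∀ z ∈ X, dotB w' y ≤ dotB w' z} := by
  have hn : 0 < n := β.pos
  have hn1 : (1:ℤ) ≤ n := by exact_mod_cast hn
  have hlin : ∀ y, dotB w' y = dotB w y + n * dotB c y := by
    intro y
    simp only [dotB, hw']
    rw [Finset.mul_sum, ← Finset.sum_add_distrib]
    congr 1; ext i; ring
  have hdiff : ∀ y ∈ X, ∀ z ∈ X, dotB w y - dotB w z ≤ (n : ℤ) - 1 := by
    intro y hy z hz
    have h1 : dotB w y - dotB w z
        = ∑ i, w i * ((if y i then (1:ℤ) else 0) - (if z i then 1 else 0)) := by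
      simp [dotB, Finset.sum_sub_distrib, mul_sub]
    have hβ : w β * ((if y β then (1:ℤ) else 0) - (if z β then 1 else 0)) = 0 := by
      rw [hagree y hy z hz]; ring
    have hsplit := Finset.add_sum_erase Finset.univ
      (fun i => w i * ((if y i then (1:ℤ) else 0) - (if z i then 1 else 0)))
      (Finset.mem_univ β)
    have hbound : ∀ i ∈ Finset.univ.erase β,
        w i * ((if y i then (1:ℤ) else 0) - (if z i then 1 else 0)) ≤ 1 := by
      intro i _
      have := hw i
      simp only [Set.mem_insert_iff, Set.mem_singleton_iff] at this
      rcases this with h | h | h <;> rw [h] <;> split_ifs <;> norm_num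
    have hsum := Finset.sum_le_sum hbound
    have hcard : (Finset.univ.erase β).card = n - 1 := by
      rw [Finset.card_erase_of_mem (Finset.mem_univ β)]
      simp
    rw [Finset.sum_const, hcard] at hsum
    rw [h1, ← hsplit]; beta_reduce; rw [hβ, zero_add]
    calc (∑ i ∈ Finset.univ.erase β,
        w i * ((if y i then (1:ℤ) else 0) - (if z i then 1 else 0)))
        ≤ (n - 1 : ℕ) • (1:ℤ) := hsum
      _ = ((n : ℤ) - 1) := by
          rw [nsmul_eq_mul, mul_one]
          push_cast [Nat.cast_sub hn]
          ring
  ext y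
  simp only [Set.mem_setOf_eq]
  constructor
  · rintro ⟨hyX, hcmin, hwmin⟩
    refine ⟨hyX, fun z hz => ?_⟩
    by_cases hzc : ∀ z' ∈ X, dotB c z ≤ dotB c z'
    · exact hwmin z hz hzc
    · push_neg at hzc
      obtain ⟨z', hz', hlt⟩ := hzc
      have h1 : dotB c y + 1 ≤ dotB c z := by
        have := hcmin z' hz'
        linarith
      have h2 := hdiff y hyX z hz
      have hm := mul_le_mul_of_nonneg_left h1 (by positivity : (0:ℤ) ≤ n)
      rw [hlin y, hlin z]
      linarith [mul_add (n:ℤ) (dotB c y) 1]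
  · rintro ⟨hyX, hwmin⟩
    have hcmin : ∀ z ∈ X, dotB c y ≤ dotB c z := by
      intro z hz
      by_contra h
      push_neg at h
      have h1 : dotB c z + 1 ≤ dotB c y := h
      have h2 := hdiff z hz y hyX
      have := hwmin z hz
      rw [hlin y, hlin z] at this
      have hm := mul_le_mul_of_nonneg_left h1 (by positivity : (0:ℤ) ≤ n)
      linarith [mul_add (n:ℤ) (dotB c z) 1]
    exact ⟨hyX, hcmin, fun z hz _ => hwmin z hz⟩
end

section
/- Let G = (X, E) be a binary graph admitting a genlex Hamilton path L = x_1,...,x_ℓ. Then the greedy algorithm that starts at x_1, and at each visited vertex x moves to an unvisited neighbor y of x minimizing λ(x,y) (breaking ties by choosing the vertex appearing earliest in L), visits exactly the sequence x_1,...,x_ℓ. -/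
lemma sameSuffix_self_lamPos {n : ℕ} (x y : Fin n → Bool) :
    sameSuffix (n - lamPos x y) x y := by
  intro i hi
  by_contra h
  have h1 : (i : ℕ) + 1 ≤ lamPos x y :=
    Finset.le_sup (f := fun i : Fin n => (i : ℕ) + 1) (by simpa using h)
  have h2 := lamPos_le x y
  omega

lemma lamPos_le_of_sameSuffix {n : ℕ} (x y : Fin n → Bool) (k : ℕ)
    (h : sameSuffix k x y) : lamPos x y ≤ n - k := by
  refine Finset.sup_le fun i hi => ?_
  simp only [Finset.mem_filter] at hi
  by_contra hc
  exact hi.2 (h i (by omega))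

lemma lamPos_genlex {n : ℕ} (L : List (Fin n → Bool)) (hgen : IsGenlex L)
    (i j m : ℕ) (hij : i ≤ j) (hjm : j ≤ m) (hm : m < L.length) :
    lamPos (L.get ⟨i, by omega⟩) (L.get ⟨j, by omega⟩) ≤
    lamPos (L.get ⟨i, by omega⟩) (L.get ⟨m, hm⟩) := by
  have h1 := sameSuffix_self_lamPos (L.get ⟨i, by omega⟩) (L.get ⟨m, hm⟩)
  have h2 := hgen (n - lamPos (L.get ⟨i, by omega⟩) (L.get ⟨m, hm⟩)) i j m hij hjm hm h1
  have h3 := lamPos_le_of_sameSuffix (L.get ⟨i, by omega⟩) (L.get ⟨j, by omega⟩) _ h2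
  have h4 := lamPos_le (L.get ⟨i, by omega⟩) (L.get ⟨m, hm⟩)
  omega

theorem greedy_computes_genlex_hamPath {n : ℕ} (X : Finset (Fin n → Bool))
    (E : (Fin n → Bool) → (Fin n → Bool) → Prop)
    (L : List (Fin n → Bool)) (hL : IsOrdering X L) (hgen : IsGenlex L)
    (hham : L.Chain' E)
    (M : List (Fin n → Bool))
    (hMsub : ∀ x ∈ M, x ∈ X) (hMnd : M.Nodup)
    (hhead : M.head? = L.head?)
    (hstep : ∀ (k : ℕ) (hk : k + 1 < M.length),
      (E (M.get ⟨k, by omega⟩) (M.get ⟨k + 1, hk⟩) ∧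
        M.get ⟨k + 1, hk⟩ ∉ M.take (k + 1)) ∧
      (∀ y ∈ X, E (M.get ⟨k, by omega⟩) y → y ∉ M.take (k + 1) →
        lamPos (M.get ⟨k, by omega⟩) (M.get ⟨k + 1, hk⟩) <
          lamPos (M.get ⟨k, by omega⟩) y ∨
        (lamPos (M.get ⟨k, by omega⟩) (M.get ⟨k + 1, hk⟩) =
            lamPos (M.get ⟨k, by omega⟩) y ∧
          L.idxOf (M.get ⟨k + 1, hk⟩) ≤ L.idxOf y)))
    (hterm : ∀ hne : M ≠ [], ∀ y ∈ X, E (M.getLast hne) y → y ∈ M) :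
    M = L := by
  obtain ⟨hLnd, hLX⟩ := hL
  have hchain := List.isChain_iff_getElem.mp hham
  have key : ∀ k, ∀ hk : k < M.length, ∃ hk' : k < L.length, M[k] = L[k]'hk' := by
    intro k
    induction k using Nat.strong_induction_on with
    | _ k ih =>
      intro hk
      match k, hk with
      | 0, hk =>
        have h0 : L[0]? = some (M[0]'hk) := by
          rw [← List.head?_eq_getElem?, ← hhead, List.head?_eq_getElem?,
            List.getElem?_eq_getElem hk]
        rw [List.getElem?_eq_some_iff] at h0
        obtain ⟨h1, h2⟩ := h0
        exact ⟨h1, h2.symm⟩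
      | k + 1, hk =>
        obtain ⟨hkL, hMk⟩ := ih k (by omega) (by omega)
        obtain ⟨⟨hE, hnotin⟩, hmin⟩ := hstep k hk
        simp only [List.get_eq_getElem] at hE hnotin hmin
        -- M[k+1] is some L[j]
        have hmem : M[k+1] ∈ L := (hLX _).mpr (hMsub _ (List.getElem_mem hk))
        obtain ⟨j, hj, hjek⟩ := List.mem_iff_getElem.mp hmem
        -- j ≥ k+1
        have hjge : k + 1 ≤ j := by
          by_contra hc
          push_neg at hc
          apply hnotin
          rw [List.mem_take_iff_getElem]
          obtain ⟨hjL', hMj⟩ := ih j (by omega) (by omega)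
          exact ⟨j, by omega, by rw [hMj, hjek]⟩
        have hk1L : k + 1 < L.length := by omega
        -- L[k+1] is a valid unvisited neighbor
        have hyX : L[k+1] ∈ X := (hLX _).mp (List.getElem_mem hk1L)
        have hEy : E (M[k]'(by omega)) (L[k+1]) := by
          rw [hMk]
          simpa using hchain k (by omega)
        have hynotin : L[k+1] ∉ M.take (k + 1) := by
          rw [List.mem_take_iff_getElem]
          rintro ⟨i, hi, hieq⟩
          obtain ⟨hiL, hMi⟩ := ih i (by omega) (by omega)
          rw [hMi] at hieq
          have := (hLnd.getElem_inj_iff).mp hieq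
          omega
        have hlam : lamPos (L[k]'(by omega)) (L[k+1]) ≤ lamPos (L[k]'(by omega)) (L[j]) := by
          have := lamPos_genlex L hgen k (k+1) j (by omega) hjge hj
          simpa using this
        rcases hmin (L[k+1]) hyX hEy hynotin with hlt | ⟨_, hidx⟩
        · rw [hMk, ← hjek] at hlt
          omega
        · rw [← hjek, List.Nodup.idxOf_getElem hLnd, List.Nodup.idxOf_getElem hLnd] at hidx
          have hjeq : j = k + 1 := by omega
          subst hjeq
          exact ⟨hj, hjek.symm⟩
  -- lengths equal
  have hlen : M.length = L.length := by
    rcases Nat.eq_zero_or_pos M.length with h0 | hpos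
    · have hMnil : M = [] := List.length_eq_zero_iff.mp h0
      subst hMnil
      have : L.head? = none := hhead.symm
      rw [List.head?_eq_none_iff] at this
      simp [this]
    · obtain ⟨hlt, _⟩ := key (M.length - 1) (by omega)
      have hle : M.length ≤ L.length := by omega
      by_contra hne
      have hMlt : M.length < L.length := by omega
      have hMne : M ≠ [] := by
        intro h; rw [h] at hpos; simp at hpos
      set k := M.length - 1 with hkdef
      obtain ⟨hkL, hMk⟩ := key k (by omega)
      have hyX : L[k+1]'(by omega) ∈ X := (hLX _).mp (List.getElem_mem (by omega))
      have hEy : E (M.getLast hMne) (L[k+1]'(by omega)) := by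
        rw [List.getLast_eq_getElem, hMk]
        simpa using hchain k (by omega)
      have := hterm hMne _ hyX hEy
      rw [List.mem_iff_getElem] at this
      obtain ⟨i, hi, hieq⟩ := this
      obtain ⟨hiL, hMi⟩ := key i hi
      rw [hMi] at hieq
      have := (hLnd.getElem_inj_iff).mp hieq
      omega
  refine List.ext_getElem hlen fun i h1 h2 => ?_
  obtain ⟨_, h⟩ := key i h1
  exact h
end

section
/- If L is a genlex ordering of X ⊆ {0,1}^n with n ≥ 1, then c(L) = c(L^{0-}) + c(L^{1-}) + n whenever both X^0 and X^1 are nonempty, where c is the prefix-change cost. -/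
lemma sameSuffix_one {n : ℕ} (x y : Fin (n+1) → Bool) :
    sameSuffix 1 x y ↔ x (Fin.last n) = y (Fin.last n) := by
  constructor
  · intro h; exact h (Fin.last n) (by simp)
  · intro h i hi
    have h1 : (i : ℕ) < n + 1 := i.isLt
    have : i = Fin.last n := Fin.ext (by simp; omega)
    rwa [this]

lemma lamPos_restr {n : ℕ} (x y : Fin (n+1) → Bool)
    (h : x (Fin.last n) = y (Fin.last n)) :
    lamPos (fun i : Fin n => x i.castSucc) (fun i : Fin n => y i.castSucc) = lamPos x y := by
  unfold lamPos
  apply le_antisymm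
  · apply Finset.sup_le
    intro i hi
    simp only [Finset.mem_filter, Finset.mem_univ, true_and] at hi
    have hm : i.castSucc ∈ Finset.univ.filter (fun j : Fin (n+1) => x j ≠ y j) := by
      simp [hi]
    calc (i : ℕ) + 1 = (i.castSucc : ℕ) + 1 := by simp
      _ ≤ _ := Finset.le_sup (f := fun j : Fin (n+1) => (j : ℕ) + 1) hm
  · apply Finset.sup_le
    intro j hj
    simp only [Finset.mem_filter, Finset.mem_univ, true_and] at hj
    have hjn : (j : ℕ) ≠ n := by
      intro h'
      exact hj (by rw [show j = Fin.last n from Fin.ext h']; exact h)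
    have hjlt : (j : ℕ) < n := lt_of_le_of_ne (Nat.lt_succ_iff.mp j.isLt) hjn
    have hcast : (Fin.castSucc ⟨(j : ℕ), hjlt⟩) = j := Fin.ext rfl
    have hm : (⟨(j : ℕ), hjlt⟩ : Fin n) ∈
        Finset.univ.filter (fun i : Fin n => x i.castSucc ≠ y i.castSucc) := by
      simp [hcast, hj]
    calc (j : ℕ) + 1 = ((⟨(j : ℕ), hjlt⟩ : Fin n) : ℕ) + 1 := rfl
      _ ≤ _ := Finset.le_sup (f := fun i : Fin n => (i : ℕ) + 1) hm

lemma lamPos_last {n : ℕ} (x y : Fin (n+1) → Bool)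
    (h : x (Fin.last n) ≠ y (Fin.last n)) : lamPos x y = n + 1 := by
  unfold lamPos
  apply le_antisymm
  · exact Finset.sup_le fun i _ => Nat.succ_le_succ (Nat.lt_succ_iff.mp i.isLt)
  · have hm : Fin.last n ∈ Finset.univ.filter (fun j : Fin (n+1) => x j ≠ y j) := by
      simp [h]
    have := Finset.le_sup (f := fun j : Fin (n+1) => (j : ℕ) + 1) hm
    simpa using this

lemma cost_cons_cons {n : ℕ} (x y : Fin n → Bool) (l : List (Fin n → Bool)) :
    cost (x :: y :: l) = lamPos x y + cost (y :: l) := rfl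

lemma cost_append {n : ℕ} : ∀ (A B : List (Fin n → Bool)) (hA : A ≠ []) (hB : B ≠ []),
    cost (A ++ B) = cost A + lamPos (A.getLast hA) (B.head hB) + cost B := by
  intro A
  induction A with
  | nil => simp
  | cons a A ih =>
    intro B hA hB
    cases A with
    | nil =>
      cases B with
      | nil => simp at hB
      | cons b B => simp [cost_cons_cons, cost]
    | cons a' A' =>
      have h2 : ((a :: a' :: A') ++ B) = a :: ((a' :: A') ++ B) := rfl
      have h3 : ((a' :: A') ++ B) = a' :: (A' ++ B) := rfl
      rw [h2, h3, cost_cons_cons, ← h3, ih _ (by simp) hB, cost_cons_cons]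
      have : (a :: a' :: A').getLast hA = (a' :: A').getLast (by simp) :=
        List.getLast_cons _
      rw [this]
      omega

lemma cost_map_restr {n : ℕ} (b : Bool) : ∀ (M : List (Fin (n+1) → Bool)),
    (∀ x ∈ M, x (Fin.last n) = b) →
    cost (M.map (fun x => fun i : Fin n => x i.castSucc)) = cost M := by
  intro M
  induction M with
  | nil => intro _; simp [cost]
  | cons a M ih =>
    intro h
    cases M with
    | nil => simp [cost]
    | cons a' M' =>
      have hmem : ∀ x ∈ a' :: M', x (Fin.last n) = b :=
        fun x hx => h x (List.mem_cons_of_mem _ hx)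
      have hcc : ((a :: a' :: M').map (fun x => fun i : Fin n => x i.castSucc)) =
          (fun i : Fin n => a i.castSucc) ::
            ((a' :: M').map (fun x => fun i : Fin n => x i.castSucc)) := rfl
      rw [hcc]
      have htl : ((a' :: M').map (fun x => fun i : Fin n => x i.castSucc)) =
          (fun i : Fin n => a' i.castSucc) :: (M'.map (fun x => fun i : Fin n => x i.castSucc)) := rfl
      rw [htl, cost_cons_cons, ← htl, ih hmem, cost_cons_cons, lamPos_restr]
      rw [h a (by simp), h a' (by simp)]

lemma key {n : ℕ} (L : List (Fin (n+1) → Bool)) (hgen : IsGenlex L) (b : Bool)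
    (hne : L ≠ []) (hb : (L.head hne) (Fin.last n) = b)
    (hother : ∃ y ∈ L, y (Fin.last n) = !b) :
    cost L =
      cost ((L.filter (fun x => x (Fin.last n) == b)).map
          (fun x => fun i : Fin n => x i.castSucc))
      + cost ((L.filter (fun x => x (Fin.last n) == !b)).map
          (fun x => fun i : Fin n => x i.castSucc))
      + (n + 1) := by
  set p : (Fin (n+1) → Bool) → Bool := fun x => x (Fin.last n) == b with hp
  set A := L.takeWhile p with hA
  set B := L.dropWhile p with hBdef
  have hAB : A ++ B = L := List.takeWhile_append_dropWhile (p := p) (l := L)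
  have hAmem : ∀ x ∈ A, x (Fin.last n) = b := by
    intro x hx
    have := List.mem_takeWhile_imp hx
    simpa [hp] using this
  have hAne : A ≠ [] := by
    have hlp : 0 < L.length := List.length_pos_iff.mpr hne
    have : p (L.head hne) = true := by simp [hp, hb]
    cases L with
    | nil => exact absurd rfl hne
    | cons a T =>
      simp only [List.head_cons] at this
      simp [hA, List.takeWhile_cons, this]
  have hlen : A.length + B.length = L.length := by
    have := congrArg List.length hAB
    simpa using this
  -- every element of B has last bit ≠ b
  have hBmem : ∀ x ∈ B, x (Fin.last n) ≠ b := by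
    intro x hx
    obtain ⟨⟨k, hk⟩, rfl⟩ := List.mem_iff_get.mp hx
    intro hbad
    have hm : A.length + k < L.length := by omega
    have hj : A.length < L.length := by omega
    have hBne : B ≠ [] := by intro h; rw [h] at hk; simp at hk
    have e1 : L.get ⟨0, by omega⟩ = L.head hne := List.get_mk_zero _
    have e2 : L.get ⟨A.length + k, hm⟩ = B.get ⟨k, hk⟩ := by
      have h1 : A.length + k < (A ++ B).length := by simp; omega
      have h2 : (A ++ B)[A.length + k]'h1 = B[k]'hk := by
        rw [List.getElem_append_right (by omega)]
        congr 1
        omega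
      calc L.get ⟨A.length + k, hm⟩ = L[A.length + k]'hm := rfl
        _ = (A ++ B)[A.length + k]'h1 := by rw [List.getElem_of_eq hAB.symm]
        _ = B[k]'hk := h2
        _ = B.get ⟨k, hk⟩ := rfl
    have hk0 : 0 < B.length := by omega
    have e3 : L.get ⟨A.length, hj⟩ = B.head hBne := by
      have h1 : A.length < (A ++ B).length := by simp; omega
      have h2 : (A ++ B)[A.length]'h1 = B[0]'hk0 := by
        rw [List.getElem_append_right (by omega)]
        congr 1
        omega
      calc L.get ⟨A.length, hj⟩ = L[A.length]'hj := rfl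
        _ = (A ++ B)[A.length]'h1 := by rw [List.getElem_of_eq hAB.symm]
        _ = B[0]'hk0 := h2
        _ = B.head hBne := (List.head_eq_getElem hBne).symm
    have hss : sameSuffix 1 (L.get ⟨0, by omega⟩) (L.get ⟨A.length + k, hm⟩) := by
      rw [sameSuffix_one, e1, e2, hb, hbad]
    have := hgen 1 0 A.length (A.length + k) (Nat.zero_le _) (by omega) hm hss
    rw [sameSuffix_one, e1, e3, hb] at this
    have hBh : p (B.head hBne) = false := List.head_dropWhile_not p (l := L) hBne
    simp [hp, this] at hBh
  have hBne : B ≠ [] := by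
    obtain ⟨y, hy, hyb⟩ := hother
    have hyA : y ∉ A := by
      intro h
      have := hAmem y h
      rw [this] at hyb
      cases b <;> simp at hyb
    rw [← hAB] at hy
    rcases List.mem_append.mp hy with h | h
    · exact absurd h hyA
    · exact List.ne_nil_of_mem h
  have hBmem' : ∀ x ∈ B, x (Fin.last n) = !b := by
    intro x hx
    have := hBmem x hx
    cases b <;> cases hx2 : x (Fin.last n) <;> simp_all
  -- filters
  have hfA : L.filter (fun x => x (Fin.last n) == b) = A := by
    rw [← hAB, List.filter_append]
    rw [List.filter_eq_self.mpr (fun x hx => by simp [hAmem x hx]),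
      List.filter_eq_nil_iff.mpr (fun x hx => by simp [hBmem' x hx]),
      List.append_nil]
  have hfB : L.filter (fun x => x (Fin.last n) == !b) = B := by
    rw [← hAB, List.filter_append]
    rw [List.filter_eq_nil_iff.mpr (fun x hx => by simp [hAmem x hx]),
      List.filter_eq_self.mpr (fun x hx => by simp [hBmem' x hx]),
      List.nil_append]
  have hlast : (A.getLast hAne) (Fin.last n) = b := hAmem _ (List.getLast_mem hAne)
  have hhead : (B.head hBne) (Fin.last n) = !b := hBmem' _ (List.head_mem hBne)
  rw [hfA, hfB, cost_map_restr b A hAmem, cost_map_restr (!b) B hBmem', ← hAB,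
    cost_append A B hAne hBne, lamPos_last _ _ (by rw [hlast, hhead]; cases b <;> simp)]
  ring

theorem genlex_cost_recursion {n : ℕ} (X : Finset (Fin (n + 1) → Bool))
    (L : List (Fin (n + 1) → Bool)) (hL : IsOrdering X L) (hgen : IsGenlex L)
    (h0 : ∃ x ∈ X, x (Fin.last n) = false) (h1 : ∃ x ∈ X, x (Fin.last n) = true) :
    cost L =
      cost ((L.filter (fun x => x (Fin.last n) == false)).map
          (fun x => fun i : Fin n => x i.castSucc))
      + cost ((L.filter (fun x => x (Fin.last n) == true)).map
          (fun x => fun i : Fin n => x i.castSucc))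
      + (n + 1) := by
  have hne : L ≠ [] := by
    obtain ⟨x0, hx0, _⟩ := h0
    intro h
    have := (hL.2 x0).mpr hx0
    simp [h] at this
  cases hb : (L.head hne) (Fin.last n) with
  | false =>
    obtain ⟨x1, hx1, hx1t⟩ := h1
    have := key L hgen false hne hb ⟨x1, (hL.2 x1).mpr hx1, by simp [hx1t]⟩
    simpa using this
  | true =>
    obtain ⟨x0, hx0, hx0f⟩ := h0
    have := key L hgen true hne hb ⟨x0, (hL.2 x0).mpr hx0, by simp [hx0f]⟩
    simp only [Bool.not_true] at this
    rw [this]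
    ring
end
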